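/- arXiv:2407.02938 — 4 statements merged into one kernel-verified Lean document; each statement's English description precedes it below -/
import Mathlib

section
/- Let n = p_1 p_2 ⋯ p_k be a product of k ≥ 2 distinct primes. Then the essential ideal graph E_{Z_n} of the ring Z_n = Z/nZ is isomorphic, as a simple graph, to the annihilating ideal graph AIG(Z_n). -/
/-- An ideal `I` of a commutative ring `R` is essential if it is nonzero and has
nonzero intersection with every nonzero ideal of `R`. -/
def IsEssentialIdeal {R : Type*} [CommRing R] (I : Ideal R) : Prop :=
  I ≠ ⊥ ∧ ∀ J : Ideal R, J ≠ ⊥ → I ⊓ J ≠ ⊥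

/-- The essential ideal graph of a commutative ring `R`: vertices are the nonzero
proper ideals of `R`, and distinct vertices `I`, `J` are adjacent iff `I + J` is
an essential ideal of `R`. -/
def essentialIdealGraph (R : Type*) [CommRing R] :
    SimpleGraph {I : Ideal R // I ≠ ⊥ ∧ I ≠ ⊤} where
  Adj I J := I ≠ J ∧ IsEssentialIdeal (I.1 ⊔ J.1)
  symm := ⟨by
    rintro I J ⟨hne, h⟩
    exact ⟨hne.symm, by rwa [sup_comm]⟩⟩
  loopless := ⟨fun I h => h.1 rfl⟩

/-- The annihilating ideal graph of a commutative ring `R`: vertices are the nonzero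
annihilating ideals of `R`, with distinct vertices `I`, `J` adjacent iff `I * J = 0`. -/
def annihilatingIdealGraph (R : Type*) [CommRing R] :
    SimpleGraph {I : Ideal R // I ≠ ⊥ ∧ ∃ J : Ideal R, J ≠ ⊥ ∧ I * J = ⊥} where
  Adj I J := I ≠ J ∧ I.1 * J.1 = ⊥
  symm := ⟨by
    rintro I J ⟨hne, h⟩
    exact ⟨hne.symm, by rwa [mul_comm]⟩⟩
  loopless := ⟨fun I h => h.1 rfl⟩

/-- A set `W` of vertices of a graph `G` is a resolving set if any two distinct
vertices are distinguished by their distance to some element of `W`. -/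
def IsResolvingSet {V : Type*} (G : SimpleGraph V) (W : Set V) : Prop :=
  ∀ u v : V, u ≠ v → ∃ w ∈ W, G.dist u w ≠ G.dist v w

/-- The metric dimension of a graph: the least cardinality of a (finite) resolving set. -/
noncomputable def metricDim {V : Type*} (G : SimpleGraph V) : ℕ :=
  sInf {k : ℕ | ∃ W : Set V, W.Finite ∧ IsResolvingSet G W ∧ W.ncard = k}

/-- The degree of a vertex: the number of vertices adjacent to it. -/
noncomputable def gdeg {V : Type*} (G : SimpleGraph V) (v : V) : ℕ :=
  Nat.card {u : V // G.Adj v u}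

/-- The first Zagreb index: the sum of the squares of the vertex degrees. -/
noncomputable def zagreb1 {V : Type*} (G : SimpleGraph V) : ℕ :=
  ∑ᶠ v : V, (gdeg G v) ^ 2

/-- The second Zagreb index: the sum over edges `{u,v}` of `deg u * deg v`. -/
noncomputable def zagreb2 {V : Type*} (G : SimpleGraph V) : ℕ :=
  ∑ᶠ e ∈ G.edgeSet, Sym2.lift ⟨fun u v => gdeg G u * gdeg G v, fun u v => mul_comm _ _⟩ e

set_option linter.unusedSectionVars false

section Aux

variable {R : Type*} [CommRing R] [IsReduced R] [IsSemisimpleRing R]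

theorem ann_span_idem {e : R} (he : IsIdempotentElem e) :
    Submodule.annihilator (Ideal.span {e}) = Ideal.span {1 - e} := by
  ext x
  rw [← Ideal.submodule_span_eq, Submodule.mem_annihilator_span_singleton, smul_eq_mul,
    Ideal.mem_span_singleton]
  constructor
  · intro h
    exact ⟨x, by rw [sub_mul, one_mul, mul_comm e x, h, sub_zero]⟩
  · rintro ⟨c, rfl⟩
    have h1 : e * e = e := he
    have h2 : (1 - e) * c * e = c * e - c * (e * e) := by ring
    rw [h2, h1, sub_self]

theorem ann_ann (I : Ideal R) : Submodule.annihilator (Submodule.annihilator I) = I := by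
  obtain ⟨e, he, rfl⟩ := IsSemisimpleRing.ideal_eq_span_idempotent I
  rw [ann_span_idem he, ann_span_idem he.one_sub, sub_sub_cancel]

theorem ann_inj : Function.Injective (Submodule.annihilator (R := R) (M := R)) := by
  intro I J h
  rw [← ann_ann I, ← ann_ann J, h]

theorem mul_ann (I : Ideal R) : I * Submodule.annihilator I = ⊥ := by
  rw [eq_bot_iff, Ideal.mul_le]
  intro r hr s hs
  rw [Submodule.mem_annihilator] at hs
  rw [Submodule.mem_bot, mul_comm, ← smul_eq_mul]
  exact hs r hr

theorem sq_bot {K : Ideal R} (h : K * K = ⊥) : K = ⊥ := by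
  have : K ≤ nilradical R := by
    intro x hx
    rw [mem_nilradical]
    refine ⟨2, ?_⟩
    rw [pow_two, ← Submodule.mem_bot (R := R), ← h]
    exact Ideal.mul_mem_mul hx hx
  rwa [nilradical_eq_zero, Submodule.zero_eq_bot, le_bot_iff] at this

theorem inf_eq_bot_iff_mul {I J : Ideal R} : I ⊓ J = ⊥ ↔ I * J = ⊥ := by
  constructor
  · intro h
    rw [eq_bot_iff, ← h]
    exact Ideal.mul_le_inf
  · intro h
    apply sq_bot
    rw [eq_bot_iff, ← h]
    exact Ideal.mul_mono inf_le_left inf_le_right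

theorem ann_eq_bot_iff {I : Ideal R} : Submodule.annihilator I = ⊥ ↔ I = ⊤ := by
  constructor
  · intro h
    rw [← ann_ann I, h, Submodule.annihilator_bot]
  · rintro rfl
    rw [eq_bot_iff]
    intro x hx
    rw [Submodule.mem_annihilator] at hx
    simpa using hx 1 trivial

theorem ann_sup (I J : Ideal R) :
    Submodule.annihilator (I ⊔ J) = Submodule.annihilator I ⊓ Submodule.annihilator J := by
  ext x
  simp only [Submodule.mem_annihilator, Submodule.mem_inf]
  constructor
  · intro h
    exact ⟨fun m hm => h m (le_sup_left (a := I) (b := J) hm),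
      fun m hm => h m (le_sup_right (a := I) (b := J) hm)⟩
  · rintro ⟨h1, h2⟩ m hm
    obtain ⟨a, ha, b, hb, rfl⟩ := Submodule.mem_sup.mp hm
    rw [smul_add, h1 a ha, h2 b hb, add_zero]

theorem essential_iff [Nontrivial R] {I : Ideal R} : IsEssentialIdeal I ↔ I = ⊤ := by
  constructor
  · rintro ⟨hbot, h⟩
    by_contra hI
    have h1 : Submodule.annihilator I ≠ ⊥ := fun hc => hI (ann_eq_bot_iff.mp hc)
    have h2 : I ⊓ Submodule.annihilator I = ⊥ := inf_eq_bot_iff_mul.mpr (mul_ann I)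
    exact h _ h1 h2
  · rintro rfl
    exact ⟨bot_lt_top.ne', fun J hJ => by rwa [top_inf_eq]⟩

theorem aig_iso [Nontrivial R] :
    Nonempty (essentialIdealGraph R ≃g annihilatingIdealGraph R) := by
  have hf : ∀ I : {I : Ideal R // I ≠ ⊥ ∧ I ≠ ⊤},
      Submodule.annihilator I.1 ≠ ⊥ ∧
      ∃ J : Ideal R, J ≠ ⊥ ∧ Submodule.annihilator I.1 * J = ⊥ := by
    rintro ⟨I, hIb, hIt⟩
    refine ⟨fun hc => hIt (ann_eq_bot_iff.mp hc), I, hIb, ?_⟩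
    rw [mul_comm]
    exact mul_ann I
  have hg : ∀ J : {I : Ideal R // I ≠ ⊥ ∧ ∃ J : Ideal R, J ≠ ⊥ ∧ I * J = ⊥},
      Submodule.annihilator J.1 ≠ ⊥ ∧ Submodule.annihilator J.1 ≠ ⊤ := by
    rintro ⟨J, hJb, J', hJ'b, hJJ'⟩
    constructor
    · intro hc
      have : J = ⊤ := ann_eq_bot_iff.mp hc
      subst this
      rw [Ideal.top_mul] at hJJ'
      exact hJ'b hJJ'
    · intro hc
      apply hJb
      rw [← ann_ann J, hc, ← ann_eq_bot_iff.mpr rfl]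
  refine ⟨⟨⟨fun I => ⟨Submodule.annihilator I.1, hf I⟩,
    fun J => ⟨Submodule.annihilator J.1, hg J⟩,
    fun I => Subtype.ext (ann_ann I.1), fun J => Subtype.ext (ann_ann J.1)⟩, ?_⟩⟩
  rintro ⟨I, hI⟩ ⟨J, hJ⟩
  show ((⟨Submodule.annihilator I, hf ⟨I, hI⟩⟩ :
      {I : Ideal R // I ≠ ⊥ ∧ ∃ J : Ideal R, J ≠ ⊥ ∧ I * J = ⊥}) ≠
      ⟨Submodule.annihilator J, hf ⟨J, hJ⟩⟩ ∧
      Submodule.annihilator I * Submodule.annihilator J = ⊥) ↔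
    ((⟨I, hI⟩ : {I : Ideal R // I ≠ ⊥ ∧ I ≠ ⊤}) ≠ ⟨J, hJ⟩ ∧ IsEssentialIdeal (I ⊔ J))
  constructor
  · rintro ⟨hne, hmul⟩
    refine ⟨fun hc => hne (by
      rw [Subtype.mk.injEq] at hc ⊢
      exact congrArg _ hc), ?_⟩
    rw [essential_iff, ← ann_eq_bot_iff, ann_sup, inf_eq_bot_iff_mul]
    exact hmul
  · rintro ⟨hne, hess⟩
    refine ⟨fun hc => hne (by
      rw [Subtype.mk.injEq] at hc ⊢
      exact ann_inj hc), ?_⟩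
    rw [← inf_eq_bot_iff_mul, ← ann_sup, ann_eq_bot_iff, ← essential_iff]
    exact hess

end Aux

theorem squarefree_of_distinct_primes {k : ℕ} (p : Fin k → ℕ)
    (hp : ∀ i, (p i).Prime) (hinj : Function.Injective p) :
    Squarefree (∏ i, p i) := by
  refine Nat.squarefree_iff_prime_squarefree.mpr fun q hq hdvd => ?_
  obtain ⟨i, -, hqi⟩ := hq.prime.exists_mem_finset_dvd (dvd_of_mul_left_dvd hdvd)
  have hqpi : q = p i := ((hp i).eq_one_or_self_of_dvd q hqi).resolve_left hq.ne_one
  rw [← Finset.mul_prod_erase Finset.univ p (Finset.mem_univ i), ← hqpi] at hdvd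
  have h2 : q ∣ ∏ j ∈ Finset.univ.erase i, p j :=
    (mul_dvd_mul_iff_left hq.ne_zero).mp hdvd
  obtain ⟨j, hj, hqj⟩ := hq.prime.exists_mem_finset_dvd h2
  have : q = p j := ((hp j).eq_one_or_self_of_dvd q hqj).resolve_left hq.ne_one
  exact (Finset.mem_erase.mp hj).1 (hinj (this.symm.trans hqpi))


/-- For `n` a product of `k ≥ 2` distinct primes, the essential ideal graph
of `ℤ/nℤ` is isomorphic to the annihilating ideal graph of `ℤ/nℤ`. -/
theorem stmt_2 (k : ℕ) (hk : 2 ≤ k) (p : Fin k → ℕ)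
    (hp : ∀ i, (p i).Prime) (hinj : Function.Injective p)
    (n : ℕ) (hn : n = ∏ i, p i) :
    Nonempty (essentialIdealGraph (ZMod n) ≃g annihilatingIdealGraph (ZMod n)) := by
  have h1 : 1 < n := by
    have hpos : 0 < n := hn ▸ Finset.prod_pos fun i _ => (hp i).pos
    have hdvd : p ⟨0, by omega⟩ ∣ n := hn ▸ Finset.dvd_prod_of_mem p (Finset.mem_univ _)
    have := Nat.le_of_dvd hpos hdvd
    have := (hp ⟨0, by omega⟩).two_le
    omega
  haveI : Fact (1 < n) := ⟨h1⟩
  haveI : NeZero n := ⟨by omega⟩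
  haveI : Fact (Squarefree n) := ⟨hn ▸ squarefree_of_distinct_primes p hp hinj⟩
  haveI : IsArtinianRing (ZMod n) := inferInstance
  haveI : IsSemisimpleRing (ZMod n) := IsArtinianRing.isSemisimpleRing_of_isReduced (R := ZMod n)
  exact aig_iso
end

section
/- Let n = p_1 p_2 p_3 p_4 p_5 be a product of 5 distinct primes. Then the metric dimension of the essential ideal graph E_{Z_n} of Z_n = Z/nZ equals 5. -/

abbrev V5 := {s : Finset (Fin 5) // s ≠ ∅ ∧ s ≠ Finset.univ}

def dcode (S T : Finset (Fin 5)) : ℕ :=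
  if S = T then 0 else if S ∩ T = ∅ then 1 else if S ∪ T = Finset.univ then 3 else 2

def G5 : SimpleGraph V5 where
  Adj a b := a ≠ b ∧ a.1 ∩ b.1 = ∅
  symm := ⟨by rintro a b ⟨h1, h2⟩; exact ⟨h1.symm, by rwa [Finset.inter_comm]⟩⟩
  loopless := ⟨fun a h => h.1 rfl⟩

lemma G5_adj_of_inter {a b : V5} (h : a.1 ∩ b.1 = ∅) : G5.Adj a b := by
  refine ⟨fun he => ?_, h⟩
  obtain ⟨x, hx⟩ := Finset.nonempty_iff_ne_empty.mpr a.2.1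
  subst he
  simp at h
  exact a.2.1 h

lemma exists_mid {V : Type*} {G : SimpleGraph V} {a b : V} (p : G.Walk a b)
    (hp : p.length = 2) : ∃ u, G.Adj a u ∧ G.Adj u b := by
  cases p with
  | nil => simp at hp
  | cons h q =>
    cases q with
    | nil => simp at hp
    | cons h' q' =>
      cases q' with
      | nil => exact ⟨_, h, h'⟩
      | cons h'' q'' => simp [SimpleGraph.Walk.length_cons] at hp

lemma G5_dist (a b : V5) : G5.dist a b = dcode a.1 b.1 := by
  unfold dcode
  by_cases hab : a = b
  · subst hab; simp [SimpleGraph.dist_self]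
  have hab1 : a.1 ≠ b.1 := fun h => hab (Subtype.ext h)
  rw [if_neg hab1]
  by_cases hd : a.1 ∩ b.1 = ∅
  · rw [if_pos hd, SimpleGraph.dist_eq_one_iff_adj]
    exact G5_adj_of_inter hd
  rw [if_neg hd]
  -- helper vertices
  by_cases hu : a.1 ∪ b.1 = Finset.univ
  · rw [if_pos hu]
    -- distance 3 : walk a - aᶜ - bᶜ - b
    have hac : (a.1ᶜ : Finset (Fin 5)) ≠ ∅ := by
      simp only [ne_eq, Finset.compl_eq_empty_iff]; exact a.2.2
    have hac2 : (a.1ᶜ : Finset (Fin 5)) ≠ Finset.univ := by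
      simp only [ne_eq, Finset.compl_eq_univ_iff]; exact a.2.1
    have hbc : (b.1ᶜ : Finset (Fin 5)) ≠ ∅ := by
      simp only [ne_eq, Finset.compl_eq_empty_iff]; exact b.2.2
    have hbc2 : (b.1ᶜ : Finset (Fin 5)) ≠ Finset.univ := by
      simp only [ne_eq, Finset.compl_eq_univ_iff]; exact b.2.1
    set c : V5 := ⟨a.1ᶜ, hac, hac2⟩
    set d : V5 := ⟨b.1ᶜ, hbc, hbc2⟩
    have h1 : G5.Adj a c := G5_adj_of_inter (by show a.1 ∩ a.1ᶜ = ∅; simp)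
    have h2 : G5.Adj c d := G5_adj_of_inter (by
      show a.1ᶜ ∩ b.1ᶜ = ∅
      rw [← Finset.compl_union, hu, Finset.compl_univ])
    have h3 : G5.Adj d b := G5_adj_of_inter (by
      show b.1ᶜ ∩ b.1 = ∅
      simp [Finset.inter_comm])
    have hle : G5.dist a b ≤ 3 := by
      refine le_trans (G5.dist_le (SimpleGraph.Walk.cons h1
        (SimpleGraph.Walk.cons h2 (SimpleGraph.Walk.cons h3 SimpleGraph.Walk.nil)))) ?_
      simp
    have hreach : G5.Reachable a b :=
      ⟨SimpleGraph.Walk.cons h1 (SimpleGraph.Walk.cons h2 (SimpleGraph.Walk.cons h3 SimpleGraph.Walk.nil))⟩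
    have h0 : G5.dist a b ≠ 0 := by
      rw [SimpleGraph.dist_ne_zero_iff_ne_and_reachable]; exact ⟨hab, hreach⟩
    have h1' : G5.dist a b ≠ 1 := by
      rw [ne_eq, SimpleGraph.dist_eq_one_iff_adj]
      rintro ⟨-, h⟩; exact hd h
    have h2' : G5.dist a b ≠ 2 := by
      intro h2eq
      obtain ⟨pw, hpw⟩ := hreach.exists_walk_length_eq_dist
      rw [h2eq] at hpw
      obtain ⟨u, h, h'⟩ := exists_mid pw hpw
      have hu1 : a.1 ∩ u.1 = ∅ := h.2
      have hu2 : u.1 ∩ b.1 = ∅ := h'.2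
      have hue : u.1 = ∅ := by
        have hsub : u.1 ⊆ (a.1 ∪ b.1)ᶜ := by
          intro x hx
          simp only [Finset.mem_compl, Finset.mem_union]
          rintro (hxa | hxb)
          · exact absurd (Finset.mem_inter.mpr ⟨hxa, hx⟩) (by simp [hu1])
          · exact absurd (Finset.mem_inter.mpr ⟨hx, hxb⟩) (by simp [hu2])
        rw [hu, Finset.compl_univ] at hsub
        exact Finset.subset_empty.mp hsub
      exact u.2.1 hue
    omega
  · rw [if_neg hu]
    -- distance 2 : walk a - (a∪b)ᶜ - b
    have hm1 : ((a.1 ∪ b.1)ᶜ : Finset (Fin 5)) ≠ ∅ := by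
      simp only [ne_eq, Finset.compl_eq_empty_iff]; exact hu
    have hm2 : ((a.1 ∪ b.1)ᶜ : Finset (Fin 5)) ≠ Finset.univ := by
      simp only [ne_eq, Finset.compl_eq_univ_iff]
      intro h
      exact a.2.1 (Finset.union_eq_empty.mp h).1
    set m : V5 := ⟨(a.1 ∪ b.1)ᶜ, hm1, hm2⟩
    have h1 : G5.Adj a m := G5_adj_of_inter (by
      show a.1 ∩ (a.1 ∪ b.1)ᶜ = ∅
      rw [Finset.eq_empty_iff_forall_notMem]
      intro x hx
      simp only [Finset.mem_inter, Finset.mem_compl, Finset.mem_union] at hx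
      exact hx.2 (Or.inl hx.1))
    have h2 : G5.Adj m b := G5_adj_of_inter (by
      show (a.1 ∪ b.1)ᶜ ∩ b.1 = ∅
      rw [Finset.eq_empty_iff_forall_notMem]
      intro x hx
      simp only [Finset.mem_inter, Finset.mem_compl, Finset.mem_union] at hx
      exact hx.1 (Or.inr hx.2))
    have hle : G5.dist a b ≤ 2 := by
      refine le_trans (G5.dist_le (SimpleGraph.Walk.cons h1 (SimpleGraph.Walk.cons h2 SimpleGraph.Walk.nil))) ?_
      simp
    have h0 : G5.dist a b ≠ 0 := by
      rw [SimpleGraph.dist_ne_zero_iff_ne_and_reachable]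
      exact ⟨hab, ⟨SimpleGraph.Walk.cons h1 (SimpleGraph.Walk.cons h2 SimpleGraph.Walk.nil)⟩⟩
    have h1' : G5.dist a b ≠ 1 := by
      rw [ne_eq, SimpleGraph.dist_eq_one_iff_adj]
      rintro ⟨-, h⟩; exact hd h
    omega

def nh : ℕ → List (List ℕ) → Bool
  | 0, F => !F.isEmpty
  | k+1, F =>
    match F with
    | [] => false
    | D :: F' => D.all fun w => nh k (F'.filter fun E => decide (w ∉ E))

lemma nh_spec : ∀ (k : ℕ) (F : List (List ℕ)) (W : Finset ℕ),
    nh k F = true → (∀ D ∈ F, ∃ w ∈ W, w ∈ D) → k < W.card := by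
  intro k
  induction k with
  | zero =>
    intro F W hnh hhit
    match F with
    | [] => simp [nh] at hnh
    | D :: F' =>
      obtain ⟨w, hwW, _⟩ := hhit D List.mem_cons_self
      exact Finset.card_pos.mpr ⟨w, hwW⟩
  | succ k ih =>
    intro F W hnh hhit
    match F with
    | [] => simp [nh] at hnh
    | D :: F' =>
      obtain ⟨w0, hw0W, hw0D⟩ := hhit D List.mem_cons_self
      have hall := (List.all_eq_true.mp hnh) w0 hw0D
      have hrec : nh k (F'.filter fun E => decide (w0 ∉ E)) = true := hall
      have hhit' : ∀ E ∈ F'.filter (fun E => decide (w0 ∉ E)), ∃ w ∈ W.erase w0, w ∈ E := by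
        intro E hE
        have hmem := (List.mem_filter.mp hE).1
        have hnot : w0 ∉ E := of_decide_eq_true (List.mem_filter.mp hE).2
        obtain ⟨w, hwW, hwE⟩ := hhit E (List.mem_cons_of_mem D hmem)
        exact ⟨w, Finset.mem_erase.mpr ⟨fun h => hnot (h ▸ hwE), hwW⟩, hwE⟩
      have := ih _ _ hrec hhit'
      have hcard : (W.erase w0).card = W.card - 1 := Finset.card_erase_of_mem hw0W
      have : 0 < W.card := Finset.card_pos.mpr ⟨w0, hw0W⟩
      omega

def enc (s : Finset (Fin 5)) : ℕ := ∑ i ∈ s, 2 ^ (i : ℕ)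

def certPairs : List (Finset (Fin 5) × Finset (Fin 5) × List ℕ) := [
  (({0,1} : Finset (Fin 5)), ({0,1,2} : Finset (Fin 5)), [3, 4, 7, 12, 20, 25, 26, 27, 28]),
  (({0,2} : Finset (Fin 5)), ({0,2,3} : Finset (Fin 5)), [5, 8, 10, 13, 19, 22, 23, 24, 26]),
  (({0,3} : Finset (Fin 5)), ({0,1,3} : Finset (Fin 5)), [2, 6, 9, 11, 18, 21, 22, 28, 29]),
  (({0,1} : Finset (Fin 5)), ({0,1,4} : Finset (Fin 5)), [3, 13, 14, 15, 16, 19, 20, 24, 28]),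
  (({0,4} : Finset (Fin 5)), ({0,2,4} : Finset (Fin 5)), [4, 6, 11, 12, 14, 17, 21, 26, 27]),
  (({3,4} : Finset (Fin 5)), ({0,3,4} : Finset (Fin 5)), [1, 3, 5, 7, 14, 22, 24, 25, 30]),
  (({1,3} : Finset (Fin 5)), ({1,3,4} : Finset (Fin 5)), [7, 10, 13, 15, 16, 17, 20, 21, 26]),
  (({1,4} : Finset (Fin 5)), ({0,1,4} : Finset (Fin 5)), [1, 5, 9, 13, 14, 18, 19, 28, 30]),
  (({0,4} : Finset (Fin 5)), ({0,3,4} : Finset (Fin 5)), [7, 8, 10, 12, 14, 17, 22, 23, 25]),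
  (({1,2} : Finset (Fin 5)), ({1,2,3} : Finset (Fin 5)), [6, 8, 9, 14, 19, 21, 23, 24, 25]),
  (({2,3} : Finset (Fin 5)), ({2,3,4} : Finset (Fin 5)), [7, 11, 12, 15, 16, 17, 18, 19, 28]),
  (({2,4} : Finset (Fin 5)), ({1,2,4} : Finset (Fin 5)), [2, 3, 10, 11, 13, 20, 22, 25, 29]),
  (({0,2} : Finset (Fin 5)), ({0,1,2} : Finset (Fin 5)), [2, 5, 7, 10, 18, 25, 26, 28, 29]),
  (({2,4} : Finset (Fin 5)), ({2,3,4} : Finset (Fin 5)), [7, 8, 9, 10, 11, 19, 20, 23, 28]),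
  (({2} : Finset (Fin 5)), ({0,2} : Finset (Fin 5)), [1, 3, 4, 5, 9, 11, 17, 19, 25, 27, 30]),
  (({4} : Finset (Fin 5)), ({2,4} : Finset (Fin 5)), [4, 5, 6, 7, 12, 13, 14, 15, 16, 20, 27]),
  (({3} : Finset (Fin 5)), ({3,4} : Finset (Fin 5)), [8, 15, 16, 17, 18, 19, 20, 21, 22, 23, 24]),
  (({0} : Finset (Fin 5)), ({0,1} : Finset (Fin 5)), [1, 2, 3, 6, 10, 14, 18, 22, 26, 29, 30]),
  (({0,3,4} : Finset (Fin 5)), ({0,1,3,4} : Finset (Fin 5)), [2, 5, 6, 12, 13, 20, 21, 25, 27, 28, 29]),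
  (({2} : Finset (Fin 5)), ({2,3} : Finset (Fin 5)), [4, 8, 9, 10, 11, 12, 23, 24, 25, 26, 27]),
  (({3} : Finset (Fin 5)), ({0,3} : Finset (Fin 5)), [1, 3, 5, 7, 8, 9, 17, 19, 21, 23, 30]),
  (({0,1} : Finset (Fin 5)), ({1,3} : Finset (Fin 5)), [1, 3, 5, 8, 10, 12, 17, 21, 23, 24, 28, 30]),
  (({0,2} : Finset (Fin 5)), ({2,4} : Finset (Fin 5)), [1, 3, 5, 9, 11, 15, 16, 18, 20, 24, 26, 30]),
  (({1,4} : Finset (Fin 5)), ({3,4} : Finset (Fin 5)), [2, 3, 6, 7, 8, 9, 12, 13, 18, 23, 24, 29]),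
  (({0,1,2} : Finset (Fin 5)), ({0,1,3} : Finset (Fin 5)), [4, 7, 8, 11, 20, 21, 22, 23, 24, 25, 26, 27]),
  (({1,2,3} : Finset (Fin 5)), ({2,3,4} : Finset (Fin 5)), [2, 3, 7, 11, 14, 15, 16, 17, 21, 25, 28, 29]),
  (({4} : Finset (Fin 5)), ({0,1,4} : Finset (Fin 5)), [1, 2, 3, 5, 6, 7, 9, 10, 11, 13, 14, 15, 16, 19, 28, 29, 30])]

def DF : List (List ℕ) := certPairs.map (fun t => t.2.2)

set_option maxRecDepth 100000 in
lemma check_nh : nh 4 DF = true := by decide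

set_option maxRecDepth 10000 in
lemma check_valid : ∀ t ∈ certPairs, t.1 ≠ ∅ ∧ t.1 ≠ Finset.univ ∧ t.2.1 ≠ ∅ ∧
    t.2.1 ≠ Finset.univ ∧ t.1 ≠ t.2.1 := by decide

set_option maxRecDepth 100000 in
lemma check_cert : ∀ t ∈ certPairs, ∀ w : Finset (Fin 5),
    dcode t.1 w ≠ dcode t.2.1 w → enc w ∈ t.2.2 := by decide

set_option maxRecDepth 10000 in
lemma check_upper : ∀ s t : Finset (Fin 5), s ≠ ∅ → s ≠ Finset.univ → t ≠ ∅ →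
    t ≠ Finset.univ → s ≠ t → ∃ i : Fin 5, dcode s {i} ≠ dcode t {i} := by decide

def sv (i : Fin 5) : V5 := ⟨{i}, by simp, by
  intro h
  have := Finset.card_univ (α := Fin 5)
  rw [← h] at this
  simp at this⟩

lemma sv_inj : Function.Injective sv := by
  intro i j h
  have : ({i} : Finset (Fin 5)) = {j} := congrArg Subtype.val h
  simpa using this

def W0 : Finset V5 := Finset.univ.image sv

lemma W0_card : W0.card = 5 := by
  rw [W0, Finset.card_image_of_injective _ sv_inj]
  simp

lemma W0_resolving : IsResolvingSet G5 (↑W0 : Set V5) := by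
  intro u v huv
  have h1 : u.1 ≠ v.1 := fun h => huv (Subtype.ext h)
  obtain ⟨i, hi⟩ := check_upper u.1 v.1 u.2.1 u.2.2 v.2.1 v.2.2 h1
  refine ⟨sv i, by simp [W0], ?_⟩
  rw [G5_dist, G5_dist]
  exact hi

lemma G5_lower {W : Set V5} (hW : W.Finite) (hres : IsResolvingSet G5 W) :
    5 ≤ W.ncard := by
  classical
  set Wf : Finset V5 := hW.toFinset with hWf
  set Wm : Finset ℕ := Wf.image (fun v => enc v.1) with hWm
  have hhit : ∀ D ∈ DF, ∃ w ∈ Wm, w ∈ D := by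
    intro D hD
    obtain ⟨t, ht, hteq⟩ := List.mem_map.mp hD
    obtain ⟨ha1, ha2, hb1, hb2, hab⟩ := check_valid t ht
    set a : V5 := ⟨t.1, ha1, ha2⟩
    set b : V5 := ⟨t.2.1, hb1, hb2⟩
    have hne : a ≠ b := fun h => hab (congrArg Subtype.val h)
    obtain ⟨w, hwW, hwd⟩ := hres a b hne
    rw [G5_dist, G5_dist] at hwd
    have : enc w.1 ∈ t.2.2 := check_cert t ht w.1 hwd
    exact ⟨enc w.1, Finset.mem_image.mpr ⟨w, hW.mem_toFinset.mpr hwW, rfl⟩, hteq ▸ this⟩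
  have h4 : 4 < Wm.card := nh_spec 4 DF Wm check_nh hhit
  have h5 : Wm.card ≤ Wf.card := Finset.card_image_le
  have h6 : W.ncard = Wf.card := by rw [hWf]; exact Set.ncard_eq_toFinset_card W hW
  omega

lemma G5_metricDim : metricDim G5 = 5 := by
  have hmem : 5 ∈ {k : ℕ | ∃ W : Set V5, W.Finite ∧ IsResolvingSet G5 W ∧ W.ncard = k} :=
    ⟨(↑W0 : Set V5), W0.finite_toSet, W0_resolving, by rw [Set.ncard_coe_finset, W0_card]⟩
  refine le_antisymm (Nat.sInf_le hmem) (le_csInf ⟨5, hmem⟩ ?_)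
  rintro k ⟨W, hWfin, hWres, rfl⟩
  exact G5_lower hWfin hWres


section Transport

variable {V V' : Type*} {G : SimpleGraph V} {G' : SimpleGraph V'}

lemma iso_dist_le (e : G ≃g G') (u v : V) : G'.dist (e u) (e v) ≤ G.dist u v := by
  by_cases h : G.Reachable u v
  · obtain ⟨p, hp⟩ := h.exists_walk_length_eq_dist
    calc G'.dist (e u) (e v) ≤ (p.map e.toHom).length := G'.dist_le _
    _ = p.length := SimpleGraph.Walk.length_map _ _
    _ = G.dist u v := hp
  · have h' : ¬ G'.Reachable (e u) (e v) := by
      intro hr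
      have h2 := hr.map e.symm.toHom
      have e1 : e.symm.toHom (e u) = u := e.symm_apply_apply u
      have e2 : e.symm.toHom (e v) = v := e.symm_apply_apply v
      rw [e1, e2] at h2
      exact h h2
    rw [SimpleGraph.dist_eq_zero_of_not_reachable h',
      SimpleGraph.dist_eq_zero_of_not_reachable h]

lemma iso_dist (e : G ≃g G') (u v : V) : G'.dist (e u) (e v) = G.dist u v := by
  refine le_antisymm (iso_dist_le e u v) ?_
  have := iso_dist_le e.symm (e u) (e v)
  simpa using this

lemma iso_resolving (e : G ≃g G') {W : Set V} (h : IsResolvingSet G W) :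
    IsResolvingSet G' (e '' W) := by
  intro u' v' hne
  obtain ⟨w, hwW, hwd⟩ := h (e.symm u') (e.symm v') (fun hh => hne (by
    have := congrArg e hh; simpa using this))
  refine ⟨e w, Set.mem_image_of_mem _ hwW, ?_⟩
  rw [← iso_dist e.symm u' (e w), ← iso_dist e.symm v' (e w)]
  simpa using hwd

lemma iso_metricDim (e : G ≃g G') : metricDim G = metricDim G' := by
  unfold metricDim
  congr 1
  ext k
  constructor
  · rintro ⟨W, hfin, hres, rfl⟩
    exact ⟨e '' W, hfin.image _, iso_resolving e hres,
      (Set.ncard_image_of_injective W (EquivLike.injective e)).symm ▸ rfl⟩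
  · rintro ⟨W, hfin, hres, rfl⟩
    refine ⟨e.symm '' W, hfin.image _, iso_resolving e.symm hres, ?_⟩
    rw [Set.ncard_image_of_injective W (EquivLike.injective e.symm)]

end Transport


section Alg

variable {p : Fin 5 → ℕ} (hp : ∀ i, (p i).Prime) (hinj : Function.Injective p)
  {n : ℕ} (hn : n = ∏ i, p i)

def dd (p : Fin 5 → ℕ) (S : Finset (Fin 5)) : ℕ := ∏ i ∈ S, p i

include hn in
lemma dd_dvd_n (S : Finset (Fin 5)) : dd p S ∣ n := by
  rw [hn]
  exact Finset.prod_dvd_prod_of_subset S Finset.univ p (Finset.subset_univ S)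

include hp in
lemma dd_pos (S : Finset (Fin 5)) : 0 < dd p S :=
  Finset.prod_pos fun i _ => (hp i).pos

include hp hn in
lemma n_pos : 0 < n := hn ▸ dd_pos hp Finset.univ

include hp hn in
lemma one_lt_n : 1 < n := by
  have h2 : 2 ≤ p 0 := (hp 0).two_le
  have hd : p 0 ∣ n := hn ▸ Finset.dvd_prod_of_mem p (Finset.mem_univ 0)
  exact lt_of_lt_of_le h2 (Nat.le_of_dvd (n_pos hp hn) hd)

include hp hinj in
lemma dd_inj {S T : Finset (Fin 5)} (h : dd p S = dd p T) : S = T := by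
  have key : ∀ S T : Finset (Fin 5), dd p S = dd p T → S ⊆ T := by
    intro S T hST i hiS
    have hdvd : p i ∣ dd p T := hST ▸ Finset.dvd_prod_of_mem p hiS
    obtain ⟨j, hjT, hdvd2⟩ := (Nat.Prime.prime (hp i)).exists_mem_finset_dvd hdvd
    have : p i = p j := (Nat.prime_dvd_prime_iff_eq (hp i) (hp j)).mp hdvd2
    rwa [hinj this]
  exact Finset.Subset.antisymm (key S T h) (key T S h.symm)

include hp hinj in
lemma dd_coprime {S T : Finset (Fin 5)} (h : S ∩ T = ∅) :
    Nat.Coprime (dd p S) (dd p T) := by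
  apply Nat.Coprime.prod_left
  intro i hiS
  apply Nat.Coprime.prod_right
  intro j hjT
  rw [Nat.coprime_primes (hp i) (hp j)]
  intro he
  have : i = j := hinj he
  subst this
  exact (Finset.eq_empty_iff_forall_notMem.mp h i) (Finset.mem_inter.mpr ⟨hiS, hjT⟩)

/-- The ideal of `ZMod n` generated by the product of primes over `S`. -/
def phi (p : Fin 5 → ℕ) (n : ℕ) (S : Finset (Fin 5)) : Ideal (ZMod n) :=
  Ideal.span {(dd p S : ZMod n)}

include hp hn in
lemma cast_dvd_iff {a b : ℕ} (ha : a ∣ n) :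
    (a : ZMod n) ∣ (b : ZMod n) ↔ a ∣ b := by
  haveI : NeZero n := ⟨by have := n_pos hp hn; omega⟩
  constructor
  · rintro ⟨c, hc⟩
    obtain ⟨c', rfl⟩ := ZMod.natCast_zmod_surjective c
    have : (b : ZMod n) = ((a * c' : ℕ) : ZMod n) := by push_cast; exact hc
    have hmod : b ≡ a * c' [MOD n] := (ZMod.natCast_eq_natCast_iff _ _ _).mp this
    have hz : (n : ℤ) ∣ (a * c' : ℕ) - (b : ℕ) := Nat.ModEq.dvd hmod
    have haz : (a : ℤ) ∣ (b : ℤ) := by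
      have h1 : (a : ℤ) ∣ ((a * c' : ℕ) : ℤ) - (b : ℤ) := by
        refine dvd_trans ?_ (by exact_mod_cast hz)
        exact_mod_cast ha
      have h2 : (a : ℤ) ∣ ((a * c' : ℕ) : ℤ) := by push_cast; exact Dvd.intro _ rfl
      have := dvd_sub h2 h1
      simpa using this
    exact_mod_cast haz
  · exact fun h => Nat.cast_dvd_cast h

include hp hn in
lemma phi_le_iff {S T : Finset (Fin 5)} : phi p n S ≤ phi p n T ↔ dd p T ∣ dd p S := by
  rw [phi, phi, Ideal.span_singleton_le_span_singleton,
    cast_dvd_iff hp hn (dd_dvd_n hn T)]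

include hp hinj hn in
lemma phi_inj {S T : Finset (Fin 5)} (h : phi p n S = phi p n T) : S = T := by
  have h1 := (phi_le_iff hp hn (S := S) (T := T)).mp h.le
  have h2 := (phi_le_iff hp hn (S := T) (T := S)).mp h.ge
  exact dd_inj hp hinj (Nat.dvd_antisymm h2 h1)

lemma phi_empty : phi p n ∅ = ⊤ := by
  rw [phi, dd]
  simp [Ideal.span_singleton_eq_top]

include hn in
lemma phi_univ : phi p n Finset.univ = ⊥ := by
  rw [phi, dd, ← hn]
  simp [Ideal.span_singleton_eq_bot]

include hp hinj hn in
lemma phi_ne_bot {S : Finset (Fin 5)} (h : S ≠ Finset.univ) : phi p n S ≠ ⊥ := by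
  rw [← phi_univ hn]
  exact fun he => h (phi_inj hp hinj hn he)

include hp hinj hn in
lemma phi_ne_top {S : Finset (Fin 5)} (h : S ≠ ∅) : phi p n S ≠ ⊤ := by
  rw [← phi_empty (p := p) (n := n)]
  exact fun he => h (phi_inj hp hinj hn he)

include hp hinj in
lemma phi_sup_eq_top {S T : Finset (Fin 5)} (h : S ∩ T = ∅) :
    phi p n S ⊔ phi p n T = ⊤ := by
  rw [← Ideal.isCoprime_iff_sup_eq, phi, phi, Ideal.isCoprime_span_singleton_iff]
  have hcop : IsCoprime ((dd p S : ℤ)) ((dd p T : ℤ)) :=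
    Nat.isCoprime_iff_coprime.mpr (dd_coprime hp hinj h)
  have h2 := hcop.map (Int.castRingHom (ZMod n))
  simpa only [eq_intCast, Int.cast_natCast] using h2

include hp hinj hn in
lemma phi_sup_ne_top {S T : Finset (Fin 5)} {i : Fin 5} (hiS : i ∈ S) (hiT : i ∈ T) :
    phi p n S ⊔ phi p n T ≠ ⊤ := by
  have h1 : phi p n S ≤ phi p n {i} :=
    (phi_le_iff hp hn).mpr (by rw [dd, Finset.prod_singleton]; exact Finset.dvd_prod_of_mem p hiS)
  have h2 : phi p n T ≤ phi p n {i} :=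
    (phi_le_iff hp hn).mpr (by rw [dd, Finset.prod_singleton]; exact Finset.dvd_prod_of_mem p hiT)
  intro he
  exact phi_ne_top hp hinj hn (Finset.singleton_ne_empty i) (top_le_iff.mp (he ▸ sup_le h1 h2))

include hp hinj hn in
lemma coprime_inf_bot {a b : ℕ} (hcop : Nat.Coprime a b) (hab : a * b = n) :
    Ideal.span {(a : ZMod n)} ⊓ Ideal.span {(b : ZMod n)} = ⊥ := by
  rw [eq_bot_iff]
  intro x hx
  rw [Submodule.mem_inf] at hx
  obtain ⟨hxa, hxb⟩ := hx
  rw [Ideal.mem_span_singleton] at hxa hxb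
  obtain ⟨u, hu⟩ := hxa
  obtain ⟨v, hv⟩ := hxb
  have hcop' : IsCoprime ((a : ZMod n)) ((b : ZMod n)) := by
    have : IsCoprime ((a : ℤ)) ((b : ℤ)) := Nat.isCoprime_iff_coprime.mpr hcop
    have h3 := this.map (Int.castRingHom (ZMod n))
    simpa only [eq_intCast, Int.cast_natCast] using h3
  obtain ⟨α, β, hαβ⟩ := hcop'
  have hab0 : (a : ZMod n) * (b : ZMod n) = 0 := by
    rw [← Nat.cast_mul, hab, ZMod.natCast_self]
  have hx : x = (α * (a : ZMod n) + β * (b : ZMod n)) * x := by rw [hαβ, one_mul]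
  have h1 : (a : ZMod n) * x = 0 := by
    rw [hv, ← mul_assoc, hab0, zero_mul]
  have h2 : (b : ZMod n) * x = 0 := by
    rw [hu, ← mul_assoc, mul_comm (b : ZMod n) (a : ZMod n), hab0, zero_mul]
  rw [Submodule.mem_bot, hx, add_mul, mul_assoc, mul_assoc, h1, h2, mul_zero, mul_zero,
    add_zero]

include hp hinj hn in
lemma phi_surj (I : Ideal (ZMod n)) : ∃ S, I = phi p n S := by
  haveI : NeZero n := ⟨fun h => by have := n_pos hp hn; omega⟩
  set f := Int.castRingHom (ZMod n) with hf
  have hfs : Function.Surjective f := ZMod.intCast_surjective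
  set J := Ideal.comap f I with hJ
  haveI hJP : Submodule.IsPrincipal J := IsPrincipalIdealRing.principal J
  set g := Submodule.IsPrincipal.generator J with hg
  have hspan : Ideal.span {g} = J := Ideal.span_singleton_generator J
  have hnJ : (n : ℤ) ∈ J := by
    rw [hJ]
    simp only [Ideal.mem_comap, hf, eq_intCast, Int.cast_natCast, ZMod.natCast_self]
    exact I.zero_mem
  have hgn : g ∣ (n : ℤ) := by
    rw [← hspan] at hnJ
    exact Ideal.mem_span_singleton.mp hnJ
  -- divisor of squarefree product is a subproduct
  have key : ∀ (s : Finset (Fin 5)) (m : ℕ), m ∣ ∏ i ∈ s, p i →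
      ∃ t ⊆ s, m = ∏ i ∈ t, p i := by
    intro s
    induction s using Finset.induction_on with
    | empty =>
      intro m hm
      simp only [Finset.prod_empty, Nat.dvd_one] at hm
      exact ⟨∅, Finset.Subset.refl _, by simp [hm]⟩
    | insert a s ha ih =>
      intro m hm
      rw [Finset.prod_insert ha] at hm
      by_cases hpa : p a ∣ m
      · obtain ⟨m', rfl⟩ := hpa
        have hppos : 0 < p a := (hp a).pos
        have hm' : m' ∣ ∏ i ∈ s, p i := (mul_dvd_mul_iff_left (by omega : p a ≠ 0)).mp hm
        obtain ⟨t, hts, rfl⟩ := ih m' hm'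
        refine ⟨insert a t, Finset.insert_subset_insert a hts, ?_⟩
        rw [Finset.prod_insert (fun hat => ha (hts hat))]
      · have hcop : Nat.Coprime (p a) m := (Nat.Prime.coprime_iff_not_dvd (hp a)).mpr hpa
        have hm' : m ∣ ∏ i ∈ s, p i := (Nat.Coprime.dvd_of_dvd_mul_left hcop.symm) hm
        obtain ⟨t, hts, rfl⟩ := ih m hm'
        exact ⟨t, hts.trans (Finset.subset_insert a s), rfl⟩
  have hmn : g.natAbs ∣ n := by
    have := Int.natAbs_dvd_natAbs.mpr hgn
    simpa using this
  obtain ⟨t, -, ht⟩ := key Finset.univ g.natAbs (by rw [← hn]; exact hmn)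
  refine ⟨t, ?_⟩
  have hmap : I = Ideal.map f J := (Ideal.map_comap_of_surjective f hfs I).symm
  rw [hmap, ← hspan, Ideal.map_span]
  have himg : f '' {g} = {((g : ℤ) : ZMod n)} := by
    simp [hf]
  rw [himg, phi, dd, ← ht]
  rcases Int.natAbs_eq g with he | he
  · conv_lhs => rw [he]
    rw [Int.cast_natCast]
  · conv_lhs => rw [he]
    rw [Int.cast_neg, Int.cast_natCast, Ideal.span_singleton_neg]

include hp hinj hn in
lemma essential_iff_top (I : Ideal (ZMod n)) : IsEssentialIdeal I ↔ I = ⊤ := by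
  haveI : Fact (1 < n) := ⟨one_lt_n hp hn⟩
  constructor
  · intro ⟨hne, hess⟩
    by_contra htop
    obtain ⟨S, rfl⟩ := phi_surj hp hinj hn I
    have hS : S ≠ ∅ := by
      intro h
      exact htop (h ▸ phi_empty)
    obtain ⟨i, hi⟩ := Finset.nonempty_iff_ne_empty.mpr hS
    set T := Finset.univ.erase i with hT
    have hTne : T ≠ Finset.univ := by
      intro h
      have hmem := Finset.mem_univ i
      rw [← h] at hmem
      exact Finset.notMem_erase i Finset.univ hmem
    have hJne : phi p n T ≠ ⊥ := phi_ne_bot hp hinj hn hTne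
    apply hess (phi p n T) hJne
    rw [eq_bot_iff]
    have h1 : phi p n S ≤ phi p n {i} :=
      (phi_le_iff hp hn).mpr (by rw [dd, Finset.prod_singleton]; exact Finset.dvd_prod_of_mem p hi)
    refine le_trans (inf_le_inf_right _ h1) ?_
    have hib : phi p n {i} ⊓ phi p n T = ⊥ := by
      rw [phi, phi]
      apply coprime_inf_bot hp hinj hn
      · apply dd_coprime hp hinj
        simp [hT]
      · rw [dd, dd, Finset.prod_singleton, hT, Finset.mul_prod_erase _ _ (Finset.mem_univ i), hn]
    rw [hib]
  · rintro rfl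
    refine ⟨?_, fun J hJ => by simpa using hJ⟩
    intro h
    have h1 : (1 : ZMod n) ∈ (⊥ : Ideal (ZMod n)) := h ▸ Submodule.mem_top
    rw [Submodule.mem_bot] at h1
    exact one_ne_zero h1

end Alg
section Final

variable {p : Fin 5 → ℕ} (hp : ∀ i, (p i).Prime) (hinj : Function.Injective p)
  {n : ℕ} (hn : n = ∏ i, p i)

include hp hinj hn in
lemma essential_iso : Nonempty (G5 ≃g essentialIdealGraph (ZMod n)) := by
  have hbij : Function.Bijective (fun S : V5 =>
      (⟨phi p n S.1, phi_ne_bot hp hinj hn S.2.2, phi_ne_top hp hinj hn S.2.1⟩ :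
        {I : Ideal (ZMod n) // I ≠ ⊥ ∧ I ≠ ⊤})) := by
    constructor
    · intro a b hab
      have h1 : phi p n a.1 = phi p n b.1 := congrArg Subtype.val hab
      exact Subtype.ext (phi_inj hp hinj hn h1)
    · intro I
      obtain ⟨S, hS⟩ := phi_surj hp hinj hn I.1
      have hS1 : S ≠ Finset.univ := fun h => I.2.1 (by rw [hS, h, phi_univ hn])
      have hS2 : S ≠ ∅ := fun h => I.2.2 (by rw [hS, h, phi_empty])
      exact ⟨⟨S, hS2, hS1⟩, Subtype.ext hS.symm⟩
  refine ⟨⟨Equiv.ofBijective _ hbij, ?_⟩⟩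
  intro a b
  simp only [Equiv.ofBijective_apply]
  have hadj : ∀ (I J : {I : Ideal (ZMod n) // I ≠ ⊥ ∧ I ≠ ⊤}),
      (essentialIdealGraph (ZMod n)).Adj I J ↔ I ≠ J ∧ IsEssentialIdeal (I.1 ⊔ J.1) :=
    fun I J => Iff.rfl
  have hadj5 : G5.Adj a b ↔ a ≠ b ∧ a.1 ∩ b.1 = ∅ := Iff.rfl
  rw [hadj, hadj5]
  constructor
  · rintro ⟨hne, hess⟩
    have htop : phi p n a.1 ⊔ phi p n b.1 = ⊤ :=
      (essential_iff_top hp hinj hn _).mp hess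
    refine ⟨?_, ?_⟩
    · intro h; subst h; exact hne rfl
    · by_contra hint
      obtain ⟨i, hi⟩ := Finset.nonempty_iff_ne_empty.mpr hint
      rw [Finset.mem_inter] at hi
      exact phi_sup_ne_top hp hinj hn hi.1 hi.2 htop
  · rintro ⟨hab, hd⟩
    constructor
    · intro h
      have h1 : phi p n a.1 = phi p n b.1 := congrArg Subtype.val h
      exact hab (Subtype.ext (phi_inj hp hinj hn h1))
    · rw [essential_iff_top hp hinj hn]
      exact phi_sup_eq_top hp hinj hd

end Final

/-- For `n` a product of `5` distinct primes, the metric dimension of the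
essential ideal graph of `ℤ/nℤ` is `5`. -/
theorem stmt_5 (p : Fin 5 → ℕ)
    (hp : ∀ i, (p i).Prime) (hinj : Function.Injective p)
    (n : ℕ) (hn : n = ∏ i, p i) :
    metricDim (essentialIdealGraph (ZMod n)) = 5 := by
  obtain ⟨e⟩ := essential_iso hp hinj hn
  rw [← iso_metricDim e]
  exact G5_metricDim
end

section
/- Let n = p_1 p_2 ⋯ p_k be a product of k ≥ 6 distinct primes. Then the set W = {⟨n/p_1⟩, ⟨n/p_2⟩, …, ⟨n/p_k⟩} of all minimal nonzero ideals of Z_n = Z/nZ is a resolving set of the essential ideal graph E_{Z_n}; consequently the metric dimension of E_{Z_n} is at most k. -/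
-- ## Auxiliary material
open Ideal
section
variable (n : ℕ)

lemma aux_surj : Function.Surjective (Int.castRingHom (ZMod n)) := ZMod.intCast_surjective

lemma aux_map_span (m : ℕ) :
    Ideal.map (Int.castRingHom (ZMod n)) (Ideal.span {(m:ℤ)}) = Ideal.span {(m : ZMod n)} := by
  rw [Ideal.map_span, Set.image_singleton]; norm_num

lemma aux_comap_span (d : ℕ) (hd : d ∣ n) :
    Ideal.comap (Int.castRingHom (ZMod n)) (Ideal.span {(d : ZMod n)}) = Ideal.span {(d:ℤ)} := by
  rw [← aux_map_span n d, Ideal.comap_map_of_surjective _ (aux_surj n), ← RingHom.ker_eq_comap_bot,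
    ZMod.ker_intCastRingHom, sup_eq_left.2]
  rw [Ideal.span_singleton_le_span_singleton]
  exact_mod_cast hd

lemma aux_le_iff (d e : ℕ) (hd : d ∣ n) (he : e ∣ n) :
    Ideal.span {(d : ZMod n)} ≤ Ideal.span {(e : ZMod n)} ↔ e ∣ d := by
  rw [← Ideal.comap_le_comap_iff_of_surjective _ (aux_surj n), aux_comap_span n d hd,
    aux_comap_span n e he, Ideal.span_singleton_le_span_singleton, Int.natCast_dvd_natCast]

lemma aux_eq_iff (d e : ℕ) (hd : d ∣ n) (he : e ∣ n) :
    Ideal.span {(d : ZMod n)} = Ideal.span {(e : ZMod n)} ↔ d = e := by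
  constructor
  · intro h
    exact Nat.dvd_antisymm ((aux_le_iff n e d he hd).1 h.ge) ((aux_le_iff n d e hd he).1 h.le)
  · rintro rfl; rfl

lemma aux_bot : (⊥ : Ideal (ZMod n)) = Ideal.span {(n : ZMod n)} := by
  rw [ZMod.natCast_self, Ideal.span_singleton_eq_bot.2 rfl]

lemma aux_top : (⊤ : Ideal (ZMod n)) = Ideal.span {((1:ℕ) : ZMod n)} := by
  norm_num

lemma aux_exists (I : Ideal (ZMod n)) : ∃ d : ℕ, d ∣ n ∧ I = Ideal.span {(d : ZMod n)} := by
  obtain ⟨g, hg⟩ := (IsPrincipalIdealRing.principal (Ideal.comap (Int.castRingHom (ZMod n)) I)).principal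
  refine ⟨g.natAbs, ?_, ?_⟩
  · rw [← Int.natCast_dvd_natCast, Int.natAbs_dvd]
    have : (n : ℤ) ∈ Ideal.comap (Int.castRingHom (ZMod n)) I := by
      simp [Ideal.mem_comap]
    rw [hg] at this
    exact Ideal.mem_span_singleton.1 this
  · have := Ideal.map_comap_of_surjective _ (aux_surj n) I
    rw [hg] at this
    rw [← this]
    show Ideal.map _ (Ideal.span {g}) = _
    rw [show Ideal.span {g} = Ideal.span {(g.natAbs : ℤ)} from
      Ideal.span_singleton_eq_span_singleton.2 (Int.associated_natAbs g), aux_map_span]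

lemma aux_sup (d e : ℕ) :
    Ideal.span {(d : ZMod n)} ⊔ Ideal.span {(e : ZMod n)} = Ideal.span {((Nat.gcd d e : ℕ) : ZMod n)} := by
  rw [← aux_map_span n d, ← aux_map_span n e, ← Ideal.map_sup, ← aux_map_span n (Nat.gcd d e)]
  congr 1
  rw [← Ideal.span_insert, ← span_gcd, ← Int.coe_gcd, Int.gcd_natCast_natCast]

lemma aux_inf_bot {d e : ℕ} (hde : Nat.Coprime d e) (hmul : d * e = n) :
    Ideal.span {(d : ZMod n)} ⊓ Ideal.span {(e : ZMod n)} = ⊥ := by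
  have hd : d ∣ n := ⟨e, hmul.symm⟩
  have he : e ∣ n := ⟨d, by rw [mul_comm]; exact hmul.symm⟩
  apply Ideal.comap_injective_of_surjective _ (aux_surj n)
  rw [Ideal.comap_inf, aux_comap_span n d hd, aux_comap_span n e he, ← RingHom.ker_eq_comap_bot,
    ZMod.ker_intCastRingHom]
  ext x
  simp only [Submodule.mem_inf, Ideal.mem_span_singleton]
  constructor
  · rintro ⟨h1, h2⟩
    have : ((d * e : ℕ) : ℤ) ∣ x := by
      push_cast
      exact (Nat.isCoprime_iff_coprime.2 hde).mul_dvd h1 h2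
    rwa [hmul] at this
  · intro h
    rw [← hmul] at h
    push_cast at h
    exact ⟨(dvd_mul_right _ _).trans h, (dvd_mul_left _ _).trans h⟩

lemma aux_essential (hp' : ∀ q : ℕ, q.Prime → q ∣ n → ¬ q ∣ n / q) (hn1 : 1 < n)
    (K : Ideal (ZMod n)) : IsEssentialIdeal K ↔ K = ⊤ := by
  haveI : NeZero n := ⟨by omega⟩
  haveI : Fact (1 < n) := ⟨hn1⟩
  constructor
  · rintro ⟨hK0, hK⟩
    obtain ⟨d, hd, rfl⟩ := aux_exists n K
    by_contra htop
    have hd1 : d ≠ 1 := by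
      intro h; subst h; exact htop (by rw [← aux_top])
    obtain ⟨q, hq, hqd⟩ := Nat.exists_prime_and_dvd hd1
    have hqn : q ∣ n := hqd.trans hd
    have hqm : q * (n / q) = n := Nat.mul_div_cancel' hqn
    have hcop : Nat.Coprime q (n / q) := (Nat.Prime.coprime_iff_not_dvd hq).2 (hp' q hq hqn)
    have hmn : n / q ≠ n := by
      have := Nat.div_lt_self (by omega : 0 < n) hq.one_lt
      omega
    have hJ0 : Ideal.span {((n / q : ℕ) : ZMod n)} ≠ ⊥ := by
      rw [aux_bot n, Ne, aux_eq_iff n _ n (Nat.div_dvd_of_dvd hqn) dvd_rfl]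
      exact hmn
    refine hK _ hJ0 ?_
    rw [← le_bot_iff, ← aux_inf_bot n hcop hqm]
    exact inf_le_inf_right _ ((aux_le_iff n d q hd hqn).2 hqd)
  · rintro rfl
    exact ⟨bot_ne_top.symm, fun J hJ => by simpa using hJ⟩
end

section
variable {k : ℕ} {p : Fin k → ℕ} {n : ℕ}

lemma main_prime_eq (hp : ∀ i, (p i).Prime) (hn : n = ∏ i, p i)
    {q : ℕ} (hq : q.Prime) (hdvd : q ∣ n) : ∃ i, q = p i := by
  subst hn
  obtain ⟨i, _, hi⟩ := hq.prime.exists_mem_finset_dvd hdvd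
  exact ⟨i, (Nat.prime_dvd_prime_iff_eq hq (hp i)).1 hi⟩

lemma main_pos (hp : ∀ i, (p i).Prime) (hn : n = ∏ i, p i) : 0 < n := by
  subst hn
  exact Finset.prod_pos fun i _ => (hp i).pos

lemma main_sf (hp : ∀ i, (p i).Prime) (hinj : Function.Injective p)
    (hn : n = ∏ i, p i) : Squarefree n := by
  rw [Nat.squarefree_iff_prime_squarefree]
  intro q hq hqq
  obtain ⟨i, rfl⟩ := main_prime_eq hp hn hq (dvd_trans (dvd_mul_right q q) hqq)
  rw [hn, ← Finset.prod_erase_mul Finset.univ p (Finset.mem_univ i)] at hqq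
  have h2 : p i ∣ ∏ j ∈ Finset.univ.erase i, p j := by
    have := (mul_dvd_mul_iff_right (hp i).pos.ne').1 hqq
    exact this
  obtain ⟨j, hj, hij⟩ := (hp i).prime.exists_mem_finset_dvd h2
  have : i = j := hinj ((Nat.prime_dvd_prime_iff_eq (hp i) (hp j)).1 hij)
  exact (Finset.mem_erase.1 hj).1 this.symm

lemma main_T_inj (hp : ∀ i, (p i).Prime) (hinj : Function.Injective p)
    (hn : n = ∏ i, p i) {d e : ℕ} (hd : d ∣ n) (he : e ∣ n)
    (h : ∀ i, p i ∣ d ↔ p i ∣ e) : d = e := by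
  have hn0 : n ≠ 0 := (main_pos hp hn).ne'
  have hsf := main_sf hp hinj hn
  have h1 : d.primeFactors = e.primeFactors := by
    ext q
    simp only [Nat.mem_primeFactors]
    constructor
    · rintro ⟨hq, hqd, -⟩
      obtain ⟨i, rfl⟩ := main_prime_eq hp hn hq (hqd.trans hd)
      exact ⟨hq, (h i).1 hqd, fun h0 => hn0 (by simpa [h0] using he)⟩
    · rintro ⟨hq, hqe, -⟩
      obtain ⟨i, rfl⟩ := main_prime_eq hp hn hq (hqe.trans he)
      exact ⟨hq, (h i).2 hqe, fun h0 => hn0 (by simpa [h0] using hd)⟩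
  calc d = ∏ q ∈ d.primeFactors, q := (Nat.prod_primeFactors_of_squarefree (hsf.squarefree_of_dvd hd)).symm
    _ = ∏ q ∈ e.primeFactors, q := by rw [h1]
    _ = e := Nat.prod_primeFactors_of_squarefree (hsf.squarefree_of_dvd he)

-- facts about m i = n / p i
lemma main_m_mul (hp : ∀ i, (p i).Prime) (hn : n = ∏ i, p i) (i : Fin k) :
    p i * (n / p i) = n ∧ (n / p i) = ∏ j ∈ Finset.univ.erase i, p j := by
  have h1 : n = p i * ∏ j ∈ Finset.univ.erase i, p j := by
    rw [hn, ← Finset.mul_prod_erase Finset.univ p (Finset.mem_univ i)]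
  have h2 : n / p i = ∏ j ∈ Finset.univ.erase i, p j := by
    rw [h1, Nat.mul_div_cancel_left _ (hp i).pos]
  exact ⟨by rw [h2, ← h1], h2⟩

lemma main_dvd_m (hp : ∀ i, (p i).Prime) (hinj : Function.Injective p)
    (hn : n = ∏ i, p i) (i j : Fin k) : p j ∣ (n / p i) ↔ j ≠ i := by
  rw [(main_m_mul hp hn i).2]
  constructor
  · rintro hdvd rfl
    have : p j * p j ∣ n := by
      rw [hn, ← Finset.mul_prod_erase Finset.univ p (Finset.mem_univ j)]
      exact mul_dvd_mul_left _ hdvd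
    exact (Nat.squarefree_iff_prime_squarefree.1 (main_sf hp hinj hn)) _ (hp j) this
  · intro hji
    exact Finset.dvd_prod_of_mem p (Finset.mem_erase.2 ⟨hji, Finset.mem_univ j⟩)

lemma main_coprime (hp : ∀ i, (p i).Prime) (hn : n = ∏ i, p i)
    {d e : ℕ} (hd : d ∣ n) (he : e ∣ n)
    (h : ∀ i, ¬(p i ∣ d ∧ p i ∣ e)) : Nat.Coprime d e := by
  by_contra hg
  obtain ⟨q, hq, hqg⟩ := Nat.exists_prime_and_dvd hg
  obtain ⟨i, rfl⟩ := main_prime_eq hp hn hq ((hqg.trans (Nat.gcd_dvd_left d e)).trans hd)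
  exact h i ⟨hqg.trans (Nat.gcd_dvd_left d e), hqg.trans (Nat.gcd_dvd_right d e)⟩
end


lemma main_not_coprime {d e q : ℕ} (hq : q.Prime) (h1 : q ∣ d) (h2 : q ∣ e) :
    ¬ Nat.Coprime d e := fun h => hq.one_lt.ne' (Nat.eq_one_of_dvd_one (h ▸ Nat.dvd_gcd h1 h2))

lemma walk2 {V : Type*} {G : SimpleGraph V} {x y : V} (q : G.Walk x y) (h : q.length = 2) :
    ∃ c, G.Adj x c ∧ G.Adj c y := by
  cases q with
  | nil => simp at h
  | cons h1 q1 =>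
    cases q1 with
    | nil => simp at h
    | cons h2 q2 =>
      cases q2 with
      | nil => exact ⟨_, h1, h2⟩
      | cons h3 q3 => simp only [SimpleGraph.Walk.length_cons] at h; omega

section Main
variable {k : ℕ} {p : Fin k → ℕ} {n : ℕ}

lemma main_n1 (hp : ∀ i, (p i).Prime) (hk : 6 ≤ k) (hn : n = ∏ i, p i) : 1 < n := by
  have i : Fin k := ⟨0, by omega⟩
  have h1 : p i ∣ n := hn ▸ Finset.dvd_prod_of_mem p (Finset.mem_univ i)
  have := Nat.le_of_dvd (main_pos hp hn) h1
  have := (hp i).two_le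
  omega

lemma main_hp' (hp : ∀ i, (p i).Prime) (hinj : Function.Injective p)
    (hn : n = ∏ i, p i) : ∀ q : ℕ, q.Prime → q ∣ n → ¬ q ∣ n / q := by
  intro q hq hqn hqd
  refine (Nat.squarefree_iff_prime_squarefree.1 (main_sf hp hinj hn)) q hq ?_
  calc q * q ∣ q * (n / q) := mul_dvd_mul_left q hqd
    _ = n := Nat.mul_div_cancel' hqn

/-- build a vertex from a divisor -/
def mkV (n d : ℕ) (hd : d ∣ n) (h1 : d ≠ 1) (h2 : d ≠ n) :
    {I : Ideal (ZMod n) // I ≠ ⊥ ∧ I ≠ ⊤} :=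
  ⟨Ideal.span {(d : ZMod n)},
   by rw [aux_bot n, Ne, aux_eq_iff n d n hd dvd_rfl]; exact h2,
   by rw [aux_top n, Ne, aux_eq_iff n d 1 hd (one_dvd n)]; exact h1⟩

lemma aux_eq_top (d : ℕ) (hd : d ∣ n) : Ideal.span {(d : ZMod n)} = ⊤ ↔ d = 1 := by
  rw [aux_top n]; exact aux_eq_iff n d 1 hd (one_dvd n)

lemma vertex_d_ne (u : {I : Ideal (ZMod n) // I ≠ ⊥ ∧ I ≠ ⊤}) {d : ℕ} (hd : d ∣ n)
    (hud : u.1 = Ideal.span {(d : ZMod n)}) : d ≠ 1 ∧ d ≠ n := by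
  constructor
  · intro h; exact u.2.2 (by rw [hud, h, ← aux_top n])
  · intro h; exact u.2.1 (by rw [hud, h, ← aux_bot n])

lemma vertex_eq_iff (u v : {I : Ideal (ZMod n) // I ≠ ⊥ ∧ I ≠ ⊤}) {d e : ℕ}
    (hd : d ∣ n) (he : e ∣ n)
    (hud : u.1 = Ideal.span {(d : ZMod n)}) (hve : v.1 = Ideal.span {(e : ZMod n)}) :
    u = v ↔ d = e := by
  rw [Subtype.ext_iff, hud, hve, aux_eq_iff n d e hd he]

lemma adj_iff (hp : ∀ i, (p i).Prime) (hinj : Function.Injective p) (hk : 6 ≤ k)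
    (hn : n = ∏ i, p i)
    (u v : {I : Ideal (ZMod n) // I ≠ ⊥ ∧ I ≠ ⊤}) {d e : ℕ} (hd : d ∣ n) (he : e ∣ n)
    (hud : u.1 = Ideal.span {(d : ZMod n)}) (hve : v.1 = Ideal.span {(e : ZMod n)}) :
    (essentialIdealGraph (ZMod n)).Adj u v ↔ (d ≠ e ∧ Nat.Coprime d e) := by
  show (u ≠ v ∧ IsEssentialIdeal (u.1 ⊔ v.1)) ↔ _
  rw [hud, hve, aux_sup n d e,
    aux_essential n (main_hp' hp hinj hn) (main_n1 hp hk hn),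
    aux_eq_top _ ((Nat.gcd_dvd_left d e).trans hd)]
  exact and_congr (not_congr (vertex_eq_iff u v hd he hud hve)) Iff.rfl

/-- the minimal-ideal vertex -/
def wV (hp : ∀ i, (p i).Prime) (hinj : Function.Injective p) (hk : 6 ≤ k)
    (hn : n = ∏ i, p i) (i : Fin k) : {I : Ideal (ZMod n) // I ≠ ⊥ ∧ I ≠ ⊤} :=
  mkV n (n / p i) (Nat.div_dvd_of_dvd (hn ▸ Finset.dvd_prod_of_mem p (Finset.mem_univ i)))
    (by
      haveI : Nontrivial (Fin k) := Fin.nontrivial_iff_two_le.2 (by omega)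
      obtain ⟨j, hj⟩ := exists_ne i
      intro h1
      have := (main_dvd_m hp hinj hn i j).2 hj
      rw [h1] at this
      exact (hp j).one_lt.ne' (Nat.eq_one_of_dvd_one this))
    (by
      intro h2
      have hpin : p i ∣ n := hn ▸ Finset.dvd_prod_of_mem p (Finset.mem_univ i)
      have := (main_dvd_m hp hinj hn i i).1
      rw [h2] at this
      exact (this hpin) rfl)

lemma wV_spec (hp : ∀ i, (p i).Prime) (hinj : Function.Injective p) (hk : 6 ≤ k)
    (hn : n = ∏ i, p i) (i : Fin k) :
    (wV hp hinj hk hn i).1 = Ideal.span {((n / p i : ℕ) : ZMod n)} := rfl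

lemma main_mdvd (hn : n = ∏ i, p i) (i : Fin k) : (n / p i) ∣ n :=
  Nat.div_dvd_of_dvd (hn ▸ Finset.dvd_prod_of_mem p (Finset.mem_univ i))

section Dist
variable (hp : ∀ i, (p i).Prime) (hinj : Function.Injective p) (hk : 6 ≤ k)
    (hn : n = ∏ i, p i)
    (u : {I : Ideal (ZMod n) // I ≠ ⊥ ∧ I ≠ ⊤}) {d : ℕ} (hd : d ∣ n)
    (hud : u.1 = Ideal.span {(d : ZMod n)}) (i : Fin k)

include hp hinj hk hn hud hd

lemma dist_one_w (hi : p i ∣ d) (hother : ∀ j, j ≠ i → ¬ p j ∣ d) :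
    (essentialIdealGraph (ZMod n)).dist u (wV hp hinj hk hn i) = 1 := by
  rw [SimpleGraph.dist_eq_one_iff_adj]
  rw [adj_iff hp hinj hk hn u _ hd (main_mdvd hn i) hud (wV_spec hp hinj hk hn i)]
  constructor
  · intro h
    exact ((main_dvd_m hp hinj hn i i).1 (h ▸ hi)) rfl
  · refine main_coprime hp hn hd (main_mdvd hn i) fun j ⟨hj1, hj2⟩ => ?_
    exact hother j ((main_dvd_m hp hinj hn i j).1 hj2) hj1

lemma bV_prop : (p i) ∣ n ∧ (p i) ≠ 1 ∧ (p i) ≠ n := by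
  have hpin : p i ∣ n := hn ▸ Finset.dvd_prod_of_mem p (Finset.mem_univ i)
  refine ⟨hpin, (hp i).one_lt.ne', ?_⟩
  intro h
  haveI : Nontrivial (Fin k) := Fin.nontrivial_iff_two_le.2 (by omega)
  obtain ⟨j, hj⟩ := exists_ne i
  have h1 : p j ∣ n / p i := (main_dvd_m hp hinj hn i j).2 hj
  have h2 : p i * (n / p i) = n := (main_m_mul hp hn i).1
  have h3 : n / p i = 1 := by
    nlinarith [(hp i).pos, (hp j).pos, Nat.le_of_dvd (by nlinarith [(hp i).pos] : 0 < n / p i) h1]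
  rw [h3] at h1
  exact (hp j).one_lt.ne' (Nat.eq_one_of_dvd_one h1)

lemma adj_b_w : (essentialIdealGraph (ZMod n)).Adj
    (mkV n (p i) (bV_prop hp hinj hk hn u hd hud i).1 (bV_prop hp hinj hk hn u hd hud i).2.1
      (bV_prop hp hinj hk hn u hd hud i).2.2) (wV hp hinj hk hn i) := by
  rw [adj_iff hp hinj hk hn _ _ (bV_prop hp hinj hk hn u hd hud i).1 (main_mdvd hn i) rfl
    (wV_spec hp hinj hk hn i)]
  have hnd : ¬ p i ∣ n / p i := fun h => ((main_dvd_m hp hinj hn i i).1 h) rfl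
  exact ⟨fun h => hnd (h ▸ dvd_rfl),
    main_coprime hp hn (bV_prop hp hinj hk hn u hd hud i).1 (main_mdvd hn i)
      (fun j ⟨hj1, hj2⟩ => by
        have h : p j = p i := (Nat.prime_dvd_prime_iff_eq (hp j) (hp i)).1 hj1
        exact hnd (h ▸ hj2))⟩

lemma not_adj_w (j : Fin k) (hj : j ≠ i) (hjd : p j ∣ d) :
    ¬ (essentialIdealGraph (ZMod n)).Adj u (wV hp hinj hk hn i) := by
  rw [adj_iff hp hinj hk hn u _ hd (main_mdvd hn i) hud (wV_spec hp hinj hk hn i)]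
  rintro ⟨-, hcop⟩
  exact main_not_coprime (hp j) hjd ((main_dvd_m hp hinj hn i j).2 hj) hcop

lemma dist_two (hi : ¬ p i ∣ d) (hne : u ≠ wV hp hinj hk hn i) :
    (essentialIdealGraph (ZMod n)).dist u (wV hp hinj hk hn i) = 2 := by
  set b := mkV n (p i) (bV_prop hp hinj hk hn u hd hud i).1 (bV_prop hp hinj hk hn u hd hud i).2.1
      (bV_prop hp hinj hk hn u hd hud i).2.2 with hbdef
  have hadj1 : (essentialIdealGraph (ZMod n)).Adj u b := by
    rw [adj_iff hp hinj hk hn u b hd (bV_prop hp hinj hk hn u hd hud i).1 hud rfl]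
    refine ⟨fun h => hi (h ▸ dvd_rfl), main_coprime hp hn hd (bV_prop hp hinj hk hn u hd hud i).1
      (fun j ⟨hj1, hj2⟩ => ?_)⟩
    have : p j = p i := (Nat.prime_dvd_prime_iff_eq (hp j) (hp i)).1 hj2
    exact hi (this ▸ hj1)
  have hadj2 := adj_b_w hp hinj hk hn u hd hud i
  have hwalk : (essentialIdealGraph (ZMod n)).dist u (wV hp hinj hk hn i) ≤ 2 := by
    have := SimpleGraph.dist_le (SimpleGraph.Walk.cons hadj1 (SimpleGraph.Walk.cons hadj2 SimpleGraph.Walk.nil))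
    simpa using this
  have hreach : (essentialIdealGraph (ZMod n)).Reachable u (wV hp hinj hk hn i) :=
    ⟨SimpleGraph.Walk.cons hadj1 (SimpleGraph.Walk.cons hadj2 SimpleGraph.Walk.nil)⟩
  have h0 : (essentialIdealGraph (ZMod n)).dist u (wV hp hinj hk hn i) ≠ 0 := by
    rw [Ne, SimpleGraph.dist_eq_zero_iff_eq_or_not_reachable]
    push_neg
    exact ⟨hne, hreach⟩
  have h1 : (essentialIdealGraph (ZMod n)).dist u (wV hp hinj hk hn i) ≠ 1 := by
    rw [Ne, SimpleGraph.dist_eq_one_iff_adj,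
      adj_iff hp hinj hk hn u _ hd (main_mdvd hn i) hud (wV_spec hp hinj hk hn i)]
    rintro ⟨hne', hcop⟩
    obtain ⟨q, hq, hqd⟩ := Nat.exists_prime_and_dvd (vertex_d_ne u hd hud).1
    obtain ⟨j, rfl⟩ := main_prime_eq hp hn hq (hqd.trans hd)
    have hji : j ≠ i := fun h => hi (h ▸ hqd)
    exact main_not_coprime (hp j) hqd ((main_dvd_m hp hinj hn i j).2 hji) hcop
  omega

lemma dist_three (hi : p i ∣ d) (j₀ : Fin k) (hj₀ : j₀ ≠ i) (hj₀d : p j₀ ∣ d) :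
    (essentialIdealGraph (ZMod n)).dist u (wV hp hinj hk hn i) = 3 := by
  classical
  have hnd : ¬ p i ∣ n / p i := fun h => ((main_dvd_m hp hinj hn i i).1 h) rfl
  have hne : u ≠ wV hp hinj hk hn i := by
    intro h
    rw [vertex_eq_iff u _ hd (main_mdvd hn i) hud (wV_spec hp hinj hk hn i)] at h
    exact hnd (h ▸ hi)
  -- the set S of indices not dividing d
  set S : Finset (Fin k) := Finset.univ.filter (fun j => ¬ p j ∣ d) with hS
  have hSmem : ∀ j, j ∈ S ↔ ¬ p j ∣ d := by
    intro j; simp [hS]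
  have hSne : S.Nonempty := by
    by_contra h
    rw [Finset.not_nonempty_iff_eq_empty] at h
    have hall : ∀ j, p j ∣ d := by
      intro j
      by_contra hc
      have : j ∈ S := (hSmem j).2 hc
      simp [h] at this
    exact (vertex_d_ne u hd hud).2 (main_T_inj hp hinj hn hd dvd_rfl
      (fun j => ⟨fun _ => hn ▸ Finset.dvd_prod_of_mem p (Finset.mem_univ j), fun _ => hall j⟩))
  set e' : ℕ := ∏ j ∈ S, p j with he'
  have he'dvd : e' ∣ n := hn ▸ Finset.prod_dvd_prod_of_subset S Finset.univ p (Finset.subset_univ S)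
  have hdvd_e' : ∀ j, p j ∣ e' ↔ j ∈ S := by
    intro j
    constructor
    · intro h
      obtain ⟨j', hj', hdj'⟩ := (hp j).prime.exists_mem_finset_dvd h
      have : j = j' := hinj ((Nat.prime_dvd_prime_iff_eq (hp j) (hp j')).1 hdj')
      rwa [this]
    · intro h; exact Finset.dvd_prod_of_mem p h
  obtain ⟨j₁, hj₁⟩ := hSne
  have he'1 : e' ≠ 1 := by
    intro h
    have := (hdvd_e' j₁).2 hj₁
    rw [h] at this
    exact (hp j₁).one_lt.ne' (Nat.eq_one_of_dvd_one this)
  have hiS : i ∉ S := fun h => (hSmem i).1 h hi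
  have he'n : e' ≠ n := by
    intro h
    exact hiS ((hdvd_e' i).1 (h ▸ (hn ▸ Finset.dvd_prod_of_mem p (Finset.mem_univ i))))
  set a := mkV n e' he'dvd he'1 he'n with ha
  set b := mkV n (p i) (bV_prop hp hinj hk hn u hd hud i).1 (bV_prop hp hinj hk hn u hd hud i).2.1
      (bV_prop hp hinj hk hn u hd hud i).2.2 with hb
  have hadj1 : (essentialIdealGraph (ZMod n)).Adj u a := by
    rw [adj_iff hp hinj hk hn u a hd he'dvd hud rfl]
    constructor
    · intro h
      exact (hSmem j₁).1 hj₁ (h ▸ ((hdvd_e' j₁).2 hj₁))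
    · refine main_coprime hp hn hd he'dvd (fun j ⟨hjd, hje⟩ => ?_)
      exact (hSmem j).1 ((hdvd_e' j).1 hje) hjd
  have hadj2 : (essentialIdealGraph (ZMod n)).Adj a b := by
    rw [adj_iff hp hinj hk hn a b he'dvd (bV_prop hp hinj hk hn u hd hud i).1 rfl rfl]
    constructor
    · intro h
      exact hiS ((hdvd_e' i).1 (h ▸ dvd_rfl))
    · refine main_coprime hp hn he'dvd (bV_prop hp hinj hk hn u hd hud i).1
        (fun j ⟨hje, hjp⟩ => ?_)
      have : p j = p i := (Nat.prime_dvd_prime_iff_eq (hp j) (hp i)).1 hjp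
      have hji : j = i := hinj this
      exact hiS (hji ▸ (hdvd_e' j).1 hje)
  have hadj3 := adj_b_w hp hinj hk hn u hd hud i
  have hle : (essentialIdealGraph (ZMod n)).dist u (wV hp hinj hk hn i) ≤ 3 := by
    have := SimpleGraph.dist_le (SimpleGraph.Walk.cons hadj1 (SimpleGraph.Walk.cons hadj2
      (SimpleGraph.Walk.cons hadj3 SimpleGraph.Walk.nil)))
    simpa using this
  have hreach : (essentialIdealGraph (ZMod n)).Reachable u (wV hp hinj hk hn i) :=
    ⟨SimpleGraph.Walk.cons hadj1 (SimpleGraph.Walk.cons hadj2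
      (SimpleGraph.Walk.cons hadj3 SimpleGraph.Walk.nil))⟩
  have h0 : (essentialIdealGraph (ZMod n)).dist u (wV hp hinj hk hn i) ≠ 0 := by
    rw [Ne, SimpleGraph.dist_eq_zero_iff_eq_or_not_reachable]
    push_neg
    exact ⟨hne, hreach⟩
  have h1 : (essentialIdealGraph (ZMod n)).dist u (wV hp hinj hk hn i) ≠ 1 := by
    rw [Ne, SimpleGraph.dist_eq_one_iff_adj]
    exact not_adj_w hp hinj hk hn u hd hud i j₀ hj₀ hj₀d
  have h2 : (essentialIdealGraph (ZMod n)).dist u (wV hp hinj hk hn i) ≠ 2 := by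
    intro h
    obtain ⟨q, hq⟩ := hreach.exists_walk_length_eq_dist
    rw [h] at hq
    obtain ⟨c, hc1, hc2⟩ := walk2 q hq
    obtain ⟨dc, hdc, hcc⟩ := aux_exists n c.1
    have hc2' := (adj_iff hp hinj hk hn c _ hdc (main_mdvd hn i) hcc
      (wV_spec hp hinj hk hn i)).1 hc2
    have hpidc : p i ∣ dc := by
      obtain ⟨q', hq', hq'dc⟩ := Nat.exists_prime_and_dvd (vertex_d_ne c hdc hcc).1
      obtain ⟨j, rfl⟩ := main_prime_eq hp hn hq' (hq'dc.trans hdc)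
      rcases eq_or_ne j i with rfl | hji
      · exact hq'dc
      · exact absurd hc2'.2 (main_not_coprime (hp j) hq'dc ((main_dvd_m hp hinj hn i j).2 hji))
    have hc1' := (adj_iff hp hinj hk hn u c hd hdc hud hcc).1 hc1
    exact absurd hc1'.2 (main_not_coprime (hp i) hi hpidc)
  omega

end Dist
end Main

/-- For `n` a product of `k ≥ 6` distinct primes, the set of all minimal
nonzero ideals `⟨n/pᵢ⟩` of `ℤ/nℤ` is a resolving set of the essential ideal graph, so
the metric dimension is at most `k`. -/
theorem stmt_6 (k : ℕ) (hk : 6 ≤ k) (p : Fin k → ℕ)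
    (hp : ∀ i, (p i).Prime) (hinj : Function.Injective p)
    (n : ℕ) (hn : n = ∏ i, p i)
    (W : Set {I : Ideal (ZMod n) // I ≠ ⊥ ∧ I ≠ ⊤})
    (hW : W = {v | ∃ i : Fin k, v.1 = Ideal.span {((n / p i : ℕ) : ZMod n)}}) :
    IsResolvingSet (essentialIdealGraph (ZMod n)) W ∧
      metricDim (essentialIdealGraph (ZMod n)) ≤ k := by
  classical
  have claim : ∀ (x y : {I : Ideal (ZMod n) // I ≠ ⊥ ∧ I ≠ ⊤}) (dx dy : ℕ),
      dx ∣ n → dy ∣ n → x.1 = Ideal.span {(dx : ZMod n)} → y.1 = Ideal.span {(dy : ZMod n)} →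
      ∀ i : Fin k, p i ∣ dx → ¬ p i ∣ dy →
      (essentialIdealGraph (ZMod n)).dist x (wV hp hinj hk hn i) ≠
        (essentialIdealGraph (ZMod n)).dist y (wV hp hinj hk hn i) := by
    intro x y dx dy hdx hdy hxd hyd i hix hiy
    have hx : (essentialIdealGraph (ZMod n)).dist x (wV hp hinj hk hn i) = 1 ∨
        (essentialIdealGraph (ZMod n)).dist x (wV hp hinj hk hn i) = 3 := by
      by_cases hcase : ∃ j, j ≠ i ∧ p j ∣ dx
      · obtain ⟨j, hj, hjd⟩ := hcase
        exact Or.inr (dist_three hp hinj hk hn x hdx hxd i hix j hj hjd)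
      · push_neg at hcase
        exact Or.inl (dist_one_w hp hinj hk hn x hdx hxd i hix hcase)
    have hy : (essentialIdealGraph (ZMod n)).dist y (wV hp hinj hk hn i) = 0 ∨
        (essentialIdealGraph (ZMod n)).dist y (wV hp hinj hk hn i) = 2 := by
      by_cases hcase : y = wV hp hinj hk hn i
      · left; rw [hcase, SimpleGraph.dist_self]
      · right; exact dist_two hp hinj hk hn y hdy hyd i hiy hcase
    rcases hx with h | h <;> rcases hy with h' | h' <;> omega
  have hres : IsResolvingSet (essentialIdealGraph (ZMod n)) W := by
    intro u v huv
    obtain ⟨du, hdu, hu⟩ := aux_exists n u.1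
    obtain ⟨dv, hdv, hv⟩ := aux_exists n v.1
    have hdune : du ≠ dv := fun h => huv ((vertex_eq_iff u v hdu hdv hu hv).2 h)
    have hex : ∃ i, ¬ (p i ∣ du ↔ p i ∣ dv) := by
      by_contra h
      push_neg at h
      exact hdune (main_T_inj hp hinj hn hdu hdv h)
    obtain ⟨i, hi⟩ := hex
    have hmem : wV hp hinj hk hn i ∈ W := by
      rw [hW]; exact ⟨i, rfl⟩
    rcases (by tauto : (p i ∣ du ∧ ¬ p i ∣ dv) ∨ (¬ p i ∣ du ∧ p i ∣ dv)) with ⟨h1, h2⟩ | ⟨h1, h2⟩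
    · exact ⟨wV hp hinj hk hn i, hmem, claim u v du dv hdu hdv hu hv i h1 h2⟩
    · exact ⟨wV hp hinj hk hn i, hmem, (claim v u dv du hdv hdu hv hu i h2 h1).symm⟩
  refine ⟨hres, ?_⟩
  have hWeq : W = Set.range (fun i => wV hp hinj hk hn i) := by
    rw [hW]
    ext v
    simp only [Set.mem_setOf_eq, Set.mem_range]
    constructor
    · rintro ⟨i, hi⟩
      exact ⟨i, Subtype.ext hi.symm⟩
    · rintro ⟨i, rfl⟩
      exact ⟨i, rfl⟩
  have hfin : W.Finite := hWeq ▸ Set.finite_range _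
  have hcard : W.ncard ≤ k := by
    rw [hWeq, ← Set.image_univ]
    refine le_trans (Set.ncard_image_le Set.finite_univ) ?_
    simp [Set.ncard_univ]
  exact le_trans (Nat.sInf_le ⟨W, hfin, hres, rfl⟩) hcard
end

section
/- Let n = p_1^{m_1} p_2^{m_2} ⋯ p_k^{m_k} with p_1 < p_2 < ⋯ < p_k primes, k ≥ 2, and m_i > 1 for at least two indices i, and let T = ∏_{i=1}^{k}(m_i + 1) − 2 be the number of nonzero proper ideals of Z_n = Z/nZ. Then the metric dimension of the essential ideal graph E_{Z_n} equals T − (2^k − 1). -/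
open Finset in
/-- Combinatorial core: a graph whose adjacency is `u ≠ v ∧ Disjoint (τ u) (τ v)`
for a "type" function `τ` into subsets of `Fin k`. -/
lemma metricDim_twin (k : ℕ) (hk : 0 < k) {V : Type*} [Fintype V] [DecidableEq V]
    (G : SimpleGraph V) (τ : V → Finset (Fin k))
    (hAdj : ∀ u v : V, G.Adj u v ↔ u ≠ v ∧ Disjoint (τ u) (τ v))
    (hneuniv : ∀ v, τ v ≠ Finset.univ)
    (hsurj : ∀ S : Finset (Fin k), S ≠ Finset.univ → ∃ v, τ v = S)
    (hsingle : ∀ i : Fin k, ∃ u v : V, u ≠ v ∧ τ u = {i} ∧ τ v = {i}) :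
    metricDim G = Fintype.card V - (2 ^ k - 1) := by
  classical
  haveI : Nonempty (Fin k) := Fin.pos_iff_nonempty.mp hk
  have hemp : (∅ : Finset (Fin k)) ≠ Finset.univ := (Finset.univ_nonempty.ne_empty).symm
  -- distance formula
  have hdist : ∀ u w : V, u ≠ w →
      G.dist u w = if Disjoint (τ u) (τ w) then 1 else 2 := by
    intro u w huw
    by_cases hdisj : Disjoint (τ u) (τ w)
    · rw [if_pos hdisj]
      exact SimpleGraph.dist_eq_one_iff_adj.mpr ((hAdj u w).2 ⟨huw, hdisj⟩)
    · rw [if_neg hdisj]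
      obtain ⟨z, hz⟩ := hsurj ∅ hemp
      have hzu : z ≠ u := by
        intro h; subst h; exact hdisj (by rw [hz]; exact Finset.disjoint_empty_left _)
      have hzw : z ≠ w := by
        intro h; subst h; exact hdisj (by rw [hz]; exact Finset.disjoint_empty_right _)
      have a1 : G.Adj u z := (hAdj u z).2 ⟨hzu.symm, by rw [hz]; exact Finset.disjoint_empty_right _⟩
      have a2 : G.Adj z w := (hAdj z w).2 ⟨hzw, by rw [hz]; exact Finset.disjoint_empty_left _⟩
      have hle : G.dist u w ≤ 2 := by
        have := SimpleGraph.dist_le (SimpleGraph.Walk.cons a1 (SimpleGraph.Walk.cons a2 SimpleGraph.Walk.nil))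
        simpa using this
      have h0 : G.dist u w ≠ 0 := by
        rw [ne_eq, SimpleGraph.dist_eq_zero_iff_eq_or_not_reachable]
        push_neg
        exact ⟨huw, ⟨SimpleGraph.Walk.cons a1 (SimpleGraph.Walk.cons a2 SimpleGraph.Walk.nil)⟩⟩
      have h1 : G.dist u w ≠ 1 := by
        rw [ne_eq, SimpleGraph.dist_eq_one_iff_adj]
        intro h
        exact hdisj ((hAdj u w).1 h).2
      omega
  -- choose representatives for each class
  have hrep' : ∀ S : {S : Finset (Fin k) // S ≠ Finset.univ}, ∃ v : V, τ v = S.1 :=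
    fun S => hsurj S.1 S.2
  choose rep hrepspec using hrep'
  have hrepinj : Function.Injective rep := by
    intro S1 S2 h
    apply Subtype.ext
    rw [← hrepspec S1, ← hrepspec S2, h]
  set R : Set V := Set.range rep with hR
  have hmemR : ∀ v : V, v ∈ R ↔ v = rep ⟨τ v, hneuniv v⟩ := by
    intro v
    constructor
    · rintro ⟨S, rfl⟩
      exact (congrArg rep (Subtype.ext (hrepspec S))).symm
    · intro h; exact ⟨_, h.symm⟩
  have hcardsub : Fintype.card {S : Finset (Fin k) // S ≠ Finset.univ} = 2 ^ k - 1 := by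
    have h1 : Fintype.card {S : Finset (Fin k) // ¬ (S = Finset.univ)} =
        Fintype.card (Finset (Fin k)) - Fintype.card {S : Finset (Fin k) // S = Finset.univ} :=
      Fintype.card_subtype_compl _
    rw [h1, Fintype.card_subtype_eq, Fintype.card_finset, Fintype.card_fin]
  have hRcard : R.ncard = 2 ^ k - 1 := by
    rw [← Nat.card_coe_set_eq, hR, Nat.card_range_of_injective hrepinj,
      Nat.card_eq_fintype_card, hcardsub]
  have hWcard : (Rᶜ).ncard = Fintype.card V - (2 ^ k - 1) := by
    have h2 := Set.ncard_add_ncard_compl R (Set.toFinite _) (Set.toFinite _)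
    rw [Nat.card_eq_fintype_card, hRcard] at h2
    omega
  -- key distinguishing lemma
  have key : ∀ u v : V, (∃ i, i ∈ τ u ∧ i ∉ τ v) →
      ∃ w ∈ Rᶜ, G.dist u w ≠ G.dist v w := by
    rintro u v ⟨i, hiu, hiv⟩
    obtain ⟨a, b, hab, ha, hb⟩ := hsingle i
    have hw : ∃ w : V, w ∉ R ∧ τ w = {i} := by
      by_cases haR : a ∈ R
      · refine ⟨b, fun hbR => hab ?_, hb⟩
        rw [(hmemR a).1 haR, (hmemR b).1 hbR]
        exact congrArg rep (Subtype.ext (ha.trans hb.symm))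
      · exact ⟨a, haR, ha⟩
    obtain ⟨w, hwR, hwi⟩ := hw
    have hwv : v ≠ w := by
      intro h; rw [h, hwi] at hiv; simp at hiv
    have hdvw : G.dist v w = 1 := by
      rw [hdist v w hwv, if_pos (by rw [hwi, Finset.disjoint_singleton_right]; exact hiv)]
    by_cases huw : u = w
    · refine ⟨w, hwR, ?_⟩
      rw [huw, SimpleGraph.dist_self, hdvw]
      omega
    · refine ⟨w, hwR, ?_⟩
      rw [hdist u w huw, hdvw, if_neg]
      · omega
      · exact Finset.not_disjoint_iff.2 ⟨i, hiu, by rw [hwi]; exact Finset.mem_singleton_self i⟩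
  -- the complement of R is a resolving set
  have hres : IsResolvingSet G Rᶜ := by
    intro u v huv
    by_cases hu : u ∈ Rᶜ
    · refine ⟨u, hu, ?_⟩
      rw [SimpleGraph.dist_self, hdist v u (Ne.symm huv)]
      by_cases h : Disjoint (τ v) (τ u) <;> simp [h]
    · by_cases hv : v ∈ Rᶜ
      · refine ⟨v, hv, ?_⟩
        rw [SimpleGraph.dist_self, hdist u v huv]
        by_cases h : Disjoint (τ u) (τ v) <;> simp [h]
      · -- both are representatives; their types differ
        simp only [Set.notMem_compl_iff] at hu hv
        have htau : τ u ≠ τ v := by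
          intro h
          apply huv
          rw [(hmemR u).1 hu, (hmemR v).1 hv]
          congr 1
          exact Subtype.ext h
        have : ∃ i, (i ∈ τ u ∧ i ∉ τ v) ∨ (i ∈ τ v ∧ i ∉ τ u) := by
          by_contra hcon
          push_neg at hcon
          apply htau
          ext i
          have := hcon i
          tauto
        obtain ⟨i, hi | hi⟩ := this
        · exact key u v ⟨i, hi⟩
        · obtain ⟨w, hwR, hne⟩ := key v u ⟨i, hi⟩
          exact ⟨w, hwR, hne.symm⟩
  -- lower bound
  have hlb : ∀ c ∈ {c : ℕ | ∃ W : Set V, W.Finite ∧ IsResolvingSet G W ∧ W.ncard = c},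
      Fintype.card V - (2 ^ k - 1) ≤ c := by
    rintro c ⟨W, hWfin, hWres, rfl⟩
    have hinj : Set.InjOn τ ((Finset.univ \ hWfin.toFinset : Finset V) : Set V) := by
      intro u hu v hv htauuv
      by_contra huv
      obtain ⟨w, hwW, hne⟩ := hWres u v huv
      apply hne
      simp only [Finset.coe_sdiff, Finset.coe_univ, Set.mem_diff, Set.Finite.coe_toFinset] at hu hv
      have hwu : u ≠ w := fun h => hu.2 (h ▸ hwW)
      have hwv : v ≠ w := fun h => hv.2 (h ▸ hwW)
      rw [hdist u w hwu, hdist v w hwv, htauuv]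
    have hmaps : ∀ v ∈ (Finset.univ \ hWfin.toFinset : Finset V),
        τ v ∈ (Finset.univ : Finset (Finset (Fin k))).erase Finset.univ :=
      fun v _ => Finset.mem_erase.2 ⟨hneuniv v, Finset.mem_univ _⟩
    have hcle := Finset.card_le_card_of_injOn τ hmaps hinj
    rw [Finset.card_erase_of_mem (Finset.mem_univ _), Finset.card_univ, Fintype.card_finset,
      Fintype.card_fin] at hcle
    rw [Finset.card_sdiff_of_subset (Finset.subset_univ _), Finset.card_univ] at hcle
    have h1 : W.ncard = hWfin.toFinset.card := Set.ncard_eq_toFinset_card W hWfin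
    have h2 : hWfin.toFinset.card ≤ Fintype.card V := Finset.card_le_univ _
    omega
  -- conclude
  have hmem : Fintype.card V - (2 ^ k - 1) ∈
      {c : ℕ | ∃ W : Set V, W.Finite ∧ IsResolvingSet G W ∧ W.ncard = c} :=
    ⟨Rᶜ, Set.toFinite _, hres, hWcard⟩
  exact le_antisymm (Nat.sInf_le hmem) (le_csInf ⟨_, hmem⟩ hlb)
section ZModIdealLemmas
variable {n : ℕ}

lemma zmod_mem_span_iff (hn : n ≠ 0) {d : ℕ} (hd : d ∣ n) (x : ZMod n) :
    x ∈ Ideal.span {(d : ZMod n)} ↔ d ∣ x.val := by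
  haveI : NeZero n := ⟨hn⟩
  rw [Ideal.mem_span_singleton]
  constructor
  · rintro ⟨y, hy⟩
    have h1 : ((x.val : ℕ) : ZMod n) = ((d * y.val : ℕ) : ZMod n) := by
      push_cast
      rw [ZMod.natCast_rightInverse x, ZMod.natCast_rightInverse y, hy]
    have h2 : x.val ≡ d * y.val [MOD n] := (ZMod.natCast_eq_natCast_iff _ _ _).1 h1
    have h3 : (n : ℤ) ∣ ((d * y.val : ℕ) : ℤ) - ((x.val : ℕ) : ℤ) := (Nat.modEq_iff_dvd).1 h2
    have h5 : (d : ℤ) ∣ ((d * y.val : ℕ) : ℤ) - ((x.val : ℕ) : ℤ) :=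
      dvd_trans (Int.natCast_dvd_natCast.2 hd) h3
    have h6 : (d : ℤ) ∣ ((d * y.val : ℕ) : ℤ) := by push_cast; exact Dvd.intro _ rfl
    have h7 : (d : ℤ) ∣ ((x.val : ℕ) : ℤ) := by
      have := dvd_sub h6 h5
      simpa using this
    exact Int.natCast_dvd_natCast.1 h7
  · rintro ⟨c, hc⟩
    refine ⟨((c : ℕ) : ZMod n), ?_⟩
    have h8 : ((x.val : ℕ) : ZMod n) = x := ZMod.natCast_rightInverse x
    rw [← h8, hc]
    push_cast
    ring

lemma zmod_ideal_eq_span (hn : n ≠ 0) (I : Ideal (ZMod n)) :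
    ∃ d : ℕ, d ∣ n ∧ I = Ideal.span {(d : ZMod n)} := by
  haveI : NeZero n := ⟨hn⟩
  haveI : IsPrincipalIdealRing (ZMod n) :=
    IsPrincipalIdealRing.of_surjective (Int.castRingHom (ZMod n)) ZMod.intCast_surjective
  obtain ⟨g, hg⟩ := (IsPrincipalIdealRing.principal I).principal
  refine ⟨Nat.gcd g.val n, Nat.gcd_dvd_right _ _, ?_⟩
  rw [hg]
  apply le_antisymm
  · rw [Ideal.submodule_span_eq, Ideal.span_le, Set.singleton_subset_iff, SetLike.mem_coe]
    exact (zmod_mem_span_iff hn (Nat.gcd_dvd_right g.val n) g).2 (Nat.gcd_dvd_left _ _)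
  · rw [Ideal.span_le, Set.singleton_subset_iff, SetLike.mem_coe, Ideal.submodule_span_eq,
      Ideal.mem_span_singleton]
    refine ⟨((Nat.gcdA g.val n : ℤ) : ZMod n), ?_⟩
    have hbez := Nat.gcd_eq_gcd_ab g.val n
    have h2 := congrArg (fun z : ℤ => ((z : ℤ) : ZMod n)) hbez
    push_cast at h2
    rw [ZMod.natCast_self, ZMod.natCast_rightInverse g] at h2
    simpa using h2

lemma zmod_span_le_span (hn : n ≠ 0) {d e : ℕ} (hd : d ∣ n) (he : e ∣ n) :
    Ideal.span {(d : ZMod n)} ≤ Ideal.span {(e : ZMod n)} ↔ e ∣ d := by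
  haveI : NeZero n := ⟨hn⟩
  constructor
  · intro h
    have hdm : (d : ZMod n) ∈ Ideal.span {(e : ZMod n)} := h (Ideal.mem_span_singleton_self _)
    rw [zmod_mem_span_iff hn he] at hdm
    rcases eq_or_lt_of_le (Nat.le_of_dvd (Nat.pos_of_ne_zero hn) hd) with h1 | h1
    · rw [h1]; exact he
    · rwa [ZMod.val_natCast_of_lt h1] at hdm
  · intro h
    rw [Ideal.span_le, Set.singleton_subset_iff, SetLike.mem_coe, zmod_mem_span_iff hn he,
      ZMod.val_natCast]
    exact (Nat.dvd_mod_iff he).2 h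

lemma zmod_span_inj (hn : n ≠ 0) {d e : ℕ} (hd : d ∣ n) (he : e ∣ n)
    (h : Ideal.span {(d : ZMod n)} = Ideal.span {(e : ZMod n)}) : d = e :=
  Nat.dvd_antisymm ((zmod_span_le_span hn he hd).1 h.ge) ((zmod_span_le_span hn hd he).1 h.le)

lemma zmod_span_sup (hn : n ≠ 0) {d e : ℕ} (hd : d ∣ n) (he : e ∣ n) :
    Ideal.span {(d : ZMod n)} ⊔ Ideal.span {(e : ZMod n)} =
      Ideal.span {((Nat.gcd d e : ℕ) : ZMod n)} := by
  have hg : Nat.gcd d e ∣ n := dvd_trans (Nat.gcd_dvd_left _ _) hd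
  apply le_antisymm
  · exact sup_le ((zmod_span_le_span hn hd hg).2 (Nat.gcd_dvd_left _ _))
      ((zmod_span_le_span hn he hg).2 (Nat.gcd_dvd_right _ _))
  · rw [Ideal.span_le, Set.singleton_subset_iff, SetLike.mem_coe]
    have hbez := Nat.gcd_eq_gcd_ab d e
    have h2 := congrArg (fun z : ℤ => ((z : ℤ) : ZMod n)) hbez
    push_cast at h2
    rw [h2]
    exact Submodule.add_mem _
      (Ideal.mem_sup_left (Ideal.mul_mem_right _ _ (Ideal.mem_span_singleton_self _)))
      (Ideal.mem_sup_right (Ideal.mul_mem_right _ _ (Ideal.mem_span_singleton_self _)))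

lemma zmod_span_eq_bot (hn : n ≠ 0) {d : ℕ} (hd : d ∣ n) :
    Ideal.span {(d : ZMod n)} = ⊥ ↔ d = n := by
  rw [Ideal.span_singleton_eq_bot, ZMod.natCast_eq_zero_iff]
  exact ⟨fun h => Nat.dvd_antisymm hd h, fun h => h ▸ dvd_rfl⟩

lemma zmod_span_eq_top (hn1 : 1 < n) {d : ℕ} (hd : d ∣ n) :
    Ideal.span {(d : ZMod n)} = ⊤ ↔ d = 1 := by
  haveI : Fact (1 < n) := ⟨hn1⟩
  constructor
  · intro h
    have h1 : (1 : ZMod n) ∈ Ideal.span {(d : ZMod n)} := by rw [h]; trivial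
    rw [zmod_mem_span_iff (by omega) hd, ZMod.val_one] at h1
    exact Nat.dvd_one.1 h1
  · rintro rfl
    simp

lemma nat_prod_dvd {ι : Type*} [DecidableEq ι] (s : Finset ι) (f : ι → ℕ) (e : ℕ)
    (hcop : ∀ i ∈ s, ∀ j ∈ s, i ≠ j → Nat.Coprime (f i) (f j))
    (hdvd : ∀ i ∈ s, f i ∣ e) : (∏ i ∈ s, f i) ∣ e := by
  induction s using Finset.induction_on with
  | empty => simpa using one_dvd e
  | @insert a s ha ih =>
    rw [Finset.prod_insert ha]
    refine Nat.Coprime.mul_dvd_of_dvd_of_dvd ?_ (hdvd a (Finset.mem_insert_self a s)) ?_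
    · exact Nat.Coprime.prod_right fun j hj =>
        hcop a (Finset.mem_insert_self a s) j (Finset.mem_insert_of_mem hj)
          (fun h => ha (h ▸ hj))
    · exact ih (fun i hi j hj hij => hcop i (Finset.mem_insert_of_mem hi) j
        (Finset.mem_insert_of_mem hj) hij) (fun i hi => hdvd i (Finset.mem_insert_of_mem hi))

lemma card_divisors_prod_pow {ι : Type*} [DecidableEq ι] (s : Finset ι) (p : ι → ℕ) (m : ι → ℕ)
    (hp : ∀ i ∈ s, (p i).Prime) (hinj : ∀ i ∈ s, ∀ j ∈ s, p i = p j → i = j) :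
    (∏ i ∈ s, p i ^ m i).divisors.card = ∏ i ∈ s, (m i + 1) := by
  induction s using Finset.induction_on with
  | empty => simp
  | @insert a s ha ih =>
    rw [Finset.prod_insert ha, Finset.prod_insert ha]
    have hcop : Nat.Coprime (p a ^ m a) (∏ i ∈ s, p i ^ m i) := by
      refine Nat.Coprime.pow_left _ (Nat.Coprime.prod_right fun j hj => ?_)
      refine Nat.Coprime.pow_right _ ?_
      refine (Nat.coprime_primes (hp a (Finset.mem_insert_self a s))
        (hp j (Finset.mem_insert_of_mem hj))).2 ?_
      intro h
      exact ha ((hinj a (Finset.mem_insert_self a s) j (Finset.mem_insert_of_mem hj) h) ▸ hj)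
    rw [hcop.card_divisors_mul]
    have hppow : ((p a ^ m a).divisors).card = m a + 1 := by
      rw [Nat.divisors_prime_pow (hp a (Finset.mem_insert_self a s))]
      rw [Finset.card_map, Finset.card_range]
    rw [hppow, ih (fun i hi => hp i (Finset.mem_insert_of_mem hi))
      (fun i hi j hj h => hinj i (Finset.mem_insert_of_mem hi) j (Finset.mem_insert_of_mem hj) h)]

end ZModIdealLemmas
/-- For `n = p₁^{m₁} ⋯ p_k^{m_k}` with `k ≥ 2` distinct primes and
`mᵢ > 1` for at least two indices, the metric dimension of the essential ideal graph of
`ℤ/nℤ` equals `T - (2^k - 1)`, where `T = ∏ (mᵢ + 1) - 2`. -/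
theorem stmt_11 (k : ℕ) (hk : 2 ≤ k) (p : Fin k → ℕ) (m : Fin k → ℕ)
    (hp : ∀ i, (p i).Prime) (hmono : StrictMono p)
    (hm : ∀ i, 1 ≤ m i) (htwo : ∃ i j : Fin k, i ≠ j ∧ 1 < m i ∧ 1 < m j)
    (n : ℕ) (hn : n = ∏ i, p i ^ m i)
    (T : ℕ) (hT : T = (∏ i, (m i + 1)) - 2) :
    metricDim (essentialIdealGraph (ZMod n)) = T - (2 ^ k - 1) := by
  classical
  set q : Fin k → ℕ := fun i => p i ^ m i with hq
  have hq1 : ∀ i, 1 < q i := fun i =>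
    Nat.one_lt_pow (Nat.one_le_iff_ne_zero.1 (hm i)) (hp i).one_lt
  have hq0 : ∀ i, q i ≠ 0 := fun i => by have := hq1 i; omega
  have hqdvd : ∀ i, q i ∣ n := fun i => hn ▸ Finset.dvd_prod_of_mem q (Finset.mem_univ i)
  have hn0 : n ≠ 0 := by
    rw [hn]
    exact Finset.prod_ne_zero_iff.2 fun i _ => hq0 i
  have i0 : Fin k := ⟨0, by omega⟩
  have hn1 : 1 < n := by
    have h1 := Nat.le_of_dvd (Nat.pos_of_ne_zero hn0) (hqdvd i0)
    have := hq1 i0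
    omega
  haveI : NeZero n := ⟨hn0⟩
  have hpinj : Function.Injective p := hmono.injective
  have hcopp : ∀ i j : Fin k, i ≠ j → Nat.Coprime (p i) (p j) := fun i j hij =>
    (Nat.coprime_primes (hp i) (hp j)).2 fun h => hij (hpinj h)
  have hcop : ∀ i j : Fin k, i ≠ j → Nat.Coprime (q i) (q j) := fun i j hij =>
    Nat.Coprime.pow _ _ (hcopp i j hij)
  have hpd : ∀ i, p i ∣ q i := fun i =>
    dvd_pow_self (p i) (Nat.one_le_iff_ne_zero.1 (hm i))
  -- if q i divides d for all i then n divides d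
  have hndvd : ∀ e : ℕ, (∀ i, q i ∣ e) → n ∣ e := fun e he => by
    rw [hn]
    exact nat_prod_dvd Finset.univ q e
      (fun i _ j _ hij => hcop i j hij) (fun i _ => he i)
  -- q i dvd lcm implies dvd one of them
  have hlcm_pp : ∀ (i : Fin k) (d e : ℕ), d ≠ 0 → e ≠ 0 →
      q i ∣ Nat.lcm d e → q i ∣ d ∨ q i ∣ e := by
    intro i d e hd he hdl
    have hl0 : Nat.lcm d e ≠ 0 := Nat.lcm_ne_zero hd he
    rw [hq] at hdl ⊢
    rw [Nat.Prime.pow_dvd_iff_le_factorization (hp i) hl0, Nat.factorization_lcm hd he,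
      Finsupp.sup_apply, le_sup_iff] at hdl
    rcases hdl with h | h
    · exact Or.inl ((Nat.Prime.pow_dvd_iff_le_factorization (hp i) hd).2 h)
    · exact Or.inr ((Nat.Prime.pow_dvd_iff_le_factorization (hp i) he).2 h)
  -- q l divides q i iff l = i
  have hqq : ∀ l i : Fin k, q l ∣ q i → l = i := by
    intro l i h
    by_contra hli
    have h1 : p l ∣ q i := dvd_trans (hpd l) h
    have h2 : p l ∣ p i := (hp l).dvd_of_dvd_pow h1
    exact hli (hpinj ((Nat.prime_dvd_prime_iff_eq (hp l) (hp i)).1 h2))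
  -- essentiality characterization
  have hess : ∀ d : ℕ, d ∣ n → d ≠ n →
      (IsEssentialIdeal (Ideal.span {(d : ZMod n)}) ↔ ∀ i, ¬ q i ∣ d) := by
    intro d hd hdn
    constructor
    · intro h i hqi
      -- J = span (n / p i) intersects trivially
      have hpin : p i ∣ n := dvd_trans (hpd i) (hqdvd i)
      have hnpd : n / p i ∣ n := Nat.div_dvd_of_dvd hpin
      have hnpn : n / p i ≠ n := by
        have := Nat.div_lt_self (Nat.pos_of_ne_zero hn0) (hp i).one_lt
        omega
      have hJ : Ideal.span {((n / p i : ℕ) : ZMod n)} ≠ ⊥ := by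
        rw [ne_eq, zmod_span_eq_bot hn0 hnpd]
        exact hnpn
      apply h.2 _ hJ
      -- show the intersection is ⊥
      rw [eq_bot_iff]
      intro x hx
      rw [Submodule.mem_inf] at hx
      rw [zmod_mem_span_iff hn0 hd] at hx
      have hx2 := hx.2
      rw [zmod_mem_span_iff hn0 hnpd] at hx2
      have hlcm : Nat.lcm d (n / p i) ∣ x.val := Nat.lcm_dvd hx.1 hx2
      -- n divides the lcm
      set c : ℕ := ∏ j ∈ Finset.univ.erase i, q j with hc
      have hsplit : n = q i * c := by
        rw [hn, hc, ← Finset.mul_prod_erase _ _ (Finset.mem_univ i)]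
      have hccop : Nat.Coprime (q i) c := by
        rw [hc]
        exact Nat.Coprime.prod_right fun j hj => hcop i j (Finset.ne_of_mem_erase hj).symm
      have hcnp : c ∣ n / p i := by
        have h1 : n = p i * ((q i / p i) * c) := by
          rw [hsplit, ← Nat.mul_assoc, Nat.mul_div_cancel' (hpd i)]
        rw [h1, Nat.mul_div_cancel_left _ (hp i).pos]
        exact dvd_mul_left c _
      have hnlcm : n ∣ Nat.lcm d (n / p i) := by
        nth_rewrite 1 [hsplit]
        exact Nat.Coprime.mul_dvd_of_dvd_of_dvd hccop
          (dvd_trans hqi (Nat.dvd_lcm_left _ _))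
          (dvd_trans hcnp (Nat.dvd_lcm_right _ _))
      have hnx : n ∣ x.val := dvd_trans hnlcm hlcm
      have hxval : x.val = 0 := Nat.eq_zero_of_dvd_of_lt hnx (ZMod.val_lt x)
      rw [Submodule.mem_bot]
      exact (ZMod.val_eq_zero x).1 hxval
    · intro h
      refine ⟨by rw [ne_eq, zmod_span_eq_bot hn0 hd]; exact hdn, ?_⟩
      intro J hJ
      obtain ⟨e, he, rfl⟩ := zmod_ideal_eq_span hn0 J
      have hen : e ≠ n := by
        intro hcontra
        rw [ne_eq, zmod_span_eq_bot hn0 he] at hJ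
        exact hJ hcontra
      have hd0 : d ≠ 0 := fun h0 => hn0 (Nat.eq_zero_of_zero_dvd (h0 ▸ hd))
      have he0 : e ≠ 0 := fun h0 => hn0 (Nat.eq_zero_of_zero_dvd (h0 ▸ he))
      have hln : Nat.lcm d e ∣ n := Nat.lcm_dvd hd he
      have hlnn : Nat.lcm d e ≠ n := by
        intro hcontra
        have hqe : ∀ i, q i ∣ e := by
          intro i
          have h1 : q i ∣ Nat.lcm d e := hcontra ▸ hqdvd i
          rcases hlcm_pp i d e hd0 he0 h1 with h2 | h2
          · exact absurd h2 (h i)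
          · exact h2
        exact hen (Nat.dvd_antisymm he (hndvd e hqe))
      have hlcmlt : Nat.lcm d e < n := by
        have := Nat.le_of_dvd (Nat.pos_of_ne_zero hn0) hln
        omega
      intro hbot
      have hx : ((Nat.lcm d e : ℕ) : ZMod n) ∈
          Ideal.span {(d : ZMod n)} ⊓ Ideal.span {(e : ZMod n)} := by
        rw [Submodule.mem_inf, zmod_mem_span_iff hn0 hd, zmod_mem_span_iff hn0 he,
          ZMod.val_natCast_of_lt hlcmlt]
        exact ⟨Nat.dvd_lcm_left _ _, Nat.dvd_lcm_right _ _⟩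
      rw [hbot, Submodule.mem_bot, ZMod.natCast_eq_zero_iff] at hx
      have hl0 : Nat.lcm d e ≠ 0 := Nat.lcm_ne_zero hd0 he0
      have := Nat.le_of_dvd (Nat.pos_of_ne_zero hl0) hx
      omega
  -- set up the vertex type
  haveI : Finite (Ideal (ZMod n)) :=
    Finite.of_injective (fun I : Ideal (ZMod n) => (I : Set (ZMod n))) SetLike.coe_injective
  haveI : Fintype {I : Ideal (ZMod n) // I ≠ ⊥ ∧ I ≠ ⊤} := Fintype.ofFinite _
  have hcls : ∀ v : {I : Ideal (ZMod n) // I ≠ ⊥ ∧ I ≠ ⊤},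
      ∃ d : ℕ, d ∣ n ∧ v.1 = Ideal.span {(d : ZMod n)} := fun v => zmod_ideal_eq_span hn0 v.1
  choose dv hdvn hdvspan using hcls
  have hdvne : ∀ v, dv v ≠ n := by
    intro v hcontra
    exact v.2.1 (by rw [hdvspan v, zmod_span_eq_bot hn0 (hdvn v)]; exact hcontra)
  have hdv1 : ∀ v, dv v ≠ 1 := by
    intro v hcontra
    exact v.2.2 (by rw [hdvspan v, zmod_span_eq_top hn1 (hdvn v)]; exact hcontra)
  -- build vertices from divisors
  have hmkv : ∀ d : ℕ, d ∣ n → d ≠ 1 → d ≠ n →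
      ∃ v : {I : Ideal (ZMod n) // I ≠ ⊥ ∧ I ≠ ⊤}, dv v = d := by
    intro d h1 h2 h3
    have hb : Ideal.span {(d : ZMod n)} ≠ ⊥ := by
      rw [ne_eq, zmod_span_eq_bot hn0 h1]; exact h3
    have ht : Ideal.span {(d : ZMod n)} ≠ ⊤ := by
      rw [ne_eq, zmod_span_eq_top hn1 h1]; exact h2
    refine ⟨⟨Ideal.span {(d : ZMod n)}, hb, ht⟩, ?_⟩
    exact zmod_span_inj hn0 (hdvn ⟨Ideal.span {(d : ZMod n)}, hb, ht⟩) h1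
      (hdvspan ⟨Ideal.span {(d : ZMod n)}, hb, ht⟩).symm
  -- the type function
  set τ : {I : Ideal (ZMod n) // I ≠ ⊥ ∧ I ≠ ⊤} → Finset (Fin k) :=
    fun v => Finset.univ.filter (fun i => q i ∣ dv v) with hτ
  have hAdj : ∀ u v, (essentialIdealGraph (ZMod n)).Adj u v ↔ u ≠ v ∧ Disjoint (τ u) (τ v) := by
    intro u v
    have hgdn : Nat.gcd (dv u) (dv v) ∣ n := dvd_trans (Nat.gcd_dvd_left _ _) (hdvn u)
    have hgne : Nat.gcd (dv u) (dv v) ≠ n := by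
      intro hcontra
      exact hdvne u (Nat.dvd_antisymm (hdvn u) (hcontra ▸ Nat.gcd_dvd_left _ _))
    have hsup : u.1 ⊔ v.1 = Ideal.span {((Nat.gcd (dv u) (dv v) : ℕ) : ZMod n)} := by
      rw [hdvspan u, hdvspan v, zmod_span_sup hn0 (hdvn u) (hdvn v)]
    show (u ≠ v ∧ IsEssentialIdeal (u.1 ⊔ v.1)) ↔ _
    rw [hsup, hess _ hgdn hgne]
    constructor
    · rintro ⟨hne, hd⟩
      refine ⟨hne, Finset.disjoint_left.2 ?_⟩
      intro i hiu hiv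
      rw [hτ, Finset.mem_filter] at hiu hiv
      exact hd i (Nat.dvd_gcd hiu.2 hiv.2)
    · rintro ⟨hne, hd⟩
      refine ⟨hne, fun i hi => ?_⟩
      have h1 : q i ∣ dv u := dvd_trans hi (Nat.gcd_dvd_left _ _)
      have h2 : q i ∣ dv v := dvd_trans hi (Nat.gcd_dvd_right _ _)
      have hmu : i ∈ τ u := by rw [hτ]; exact Finset.mem_filter.2 ⟨Finset.mem_univ i, h1⟩
      have hmv : i ∈ τ v := by rw [hτ]; exact Finset.mem_filter.2 ⟨Finset.mem_univ i, h2⟩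
      exact Finset.disjoint_left.1 hd hmu hmv
  have hneuniv : ∀ v, τ v ≠ Finset.univ := by
    intro v hcontra
    apply hdvne v
    apply Nat.dvd_antisymm (hdvn v)
    apply hndvd
    intro i
    have : i ∈ τ v := hcontra ▸ Finset.mem_univ i
    rw [hτ, Finset.mem_filter] at this
    exact this.2
  obtain ⟨a0, b0, hab0, hma0, hmb0⟩ := htwo
  have hsurj : ∀ S : Finset (Fin k), S ≠ Finset.univ → ∃ v, τ v = S := by
    intro S hS
    have hexj : ∃ j0, j0 ∉ S := by
      by_contra hc
      push_neg at hc
      exact hS (Finset.eq_univ_iff_forall.2 hc)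
    obtain ⟨j0, hj0⟩ := hexj
    rcases Finset.eq_empty_or_nonempty S with hSe | hSne
    · -- use d = p a0
      have h1 : p a0 ∣ n := dvd_trans (hpd a0) (hqdvd a0)
      have hqpa : ∀ i, ¬ q i ∣ p a0 := by
        intro i hi
        by_cases hia : i = a0
        · subst hia
          have h2 : q i ∣ p i ^ 1 := by rwa [pow_one]
          rw [hq] at h2
          have := (Nat.pow_dvd_pow_iff_le_right (hp i).one_lt).1 h2
          have := hma0
          omega
        · have h2 : p i ∣ p a0 := dvd_trans (hpd i) hi
          exact hia (hpinj ((Nat.prime_dvd_prime_iff_eq (hp i) (hp a0)).1 h2))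
      have h2 : p a0 ≠ 1 := (hp a0).one_lt.ne'
      have h3 : p a0 ≠ n := by
        intro hcontra
        exact hqpa a0 (hcontra ▸ hqdvd a0)
      obtain ⟨v, hv⟩ := hmkv (p a0) h1 h2 h3
      refine ⟨v, ?_⟩
      rw [hSe, hτ]
      ext i
      simp only [Finset.mem_filter, Finset.mem_univ, true_and, Finset.notMem_empty,
        iff_false]
      rw [hv]
      exact hqpa i
    · -- use d = ∏ i in S, q i
      set d : ℕ := ∏ i ∈ S, q i with hd
      have hddvd : d ∣ n := by
        rw [hn, hd]
        exact Finset.prod_dvd_prod_of_subset S Finset.univ q (Finset.subset_univ S)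
      have hmem : ∀ i, q i ∣ d ↔ i ∈ S := by
        intro i
        constructor
        · intro hi
          by_contra hiS
          have h1 : p i ∣ d := dvd_trans (hpd i) hi
          rw [hd] at h1
          obtain ⟨j, hjS, hj⟩ := ((hp i).prime.dvd_finset_prod_iff q).1 h1
          have h2 : p i ∣ p j := (hp i).dvd_of_dvd_pow hj
          exact hiS ((hpinj ((Nat.prime_dvd_prime_iff_eq (hp i) (hp j)).1 h2)) ▸ hjS)
        · intro hi
          rw [hd]
          exact Finset.dvd_prod_of_mem q hi
      obtain ⟨j1, hj1⟩ := hSne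
      have hd1 : d ≠ 1 := by
        intro hcontra
        have h1 := (hmem j1).2 hj1
        rw [hcontra, Nat.dvd_one] at h1
        have := hq1 j1
        omega
      have hdn : d ≠ n := by
        intro hcontra
        exact hj0 ((hmem j0).1 (hcontra ▸ hqdvd j0))
      obtain ⟨v, hv⟩ := hmkv d hddvd hd1 hdn
      refine ⟨v, ?_⟩
      rw [hτ]
      ext i
      simp only [Finset.mem_filter, Finset.mem_univ, true_and]
      rw [hv]
      exact hmem i
  -- singleton classes have at least two elements
  have hsingle : ∀ i : Fin k, ∃ u v, u ≠ v ∧ τ u = {i} ∧ τ v = {i} := by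
    intro i
    -- pick j ≠ i with 1 < m j
    have hexj : ∃ j, j ≠ i ∧ 1 < m j := by
      by_cases hia : i = a0
      · exact ⟨b0, fun h => hab0 (hia ▸ h.symm), hmb0⟩
      · exact ⟨a0, fun h => hia h.symm, hma0⟩
    obtain ⟨j, hji, hmj⟩ := hexj
    -- claim: q j does not divide q i * p j
    have hkey : ¬ q j ∣ q i * p j := by
      intro hcontra
      have h1 : p j * p j ^ (m j - 1) ∣ p j * q i := by
        have e1 : p j * p j ^ (m j - 1) = q j := by
          rw [hq, ← pow_succ']
          congr 1
          omega
        have e2 : p j * q i = q i * p j := mul_comm _ _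
        rw [e1, e2]
        exact hcontra
      have h2 : p j ^ (m j - 1) ∣ q i := (Nat.mul_dvd_mul_iff_left (hp j).pos).1 h1
      have h3 : p j ∣ q i := dvd_trans (dvd_pow_self (p j) (by omega)) h2
      have h4 : p j ∣ p i := (hp j).dvd_of_dvd_pow h3
      exact hji (hpinj ((Nat.prime_dvd_prime_iff_eq (hp j) (hp i)).1 h4))
    -- first vertex : q i
    have hqine : q i ≠ n := by
      intro hcontra
      apply hkey
      exact dvd_trans (hcontra ▸ hqdvd j) (Dvd.intro _ rfl)
    have hqi1 : q i ≠ 1 := by have := hq1 i; omega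
    obtain ⟨u, hu⟩ := hmkv (q i) (hqdvd i) hqi1 hqine
    -- second vertex : q i * p j
    have hd2dvd : q i * p j ∣ n := by
      have h1 : q i * p j ∣ q i * q j := Nat.mul_dvd_mul_left (q i) (hpd j)
      have h2 : q i * q j ∣ n := by
        rw [hn, ← Finset.mul_prod_erase _ _ (Finset.mem_univ i)]
        refine Nat.mul_dvd_mul_left (q i) ?_
        exact Finset.dvd_prod_of_mem q (Finset.mem_erase.2 ⟨hji, Finset.mem_univ j⟩)
      exact dvd_trans h1 h2
    have hd21 : q i * p j ≠ 1 := by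
      intro hcontra
      have h1 : q i ∣ 1 := hcontra ▸ dvd_mul_right (q i) (p j)
      rw [Nat.dvd_one] at h1
      have := hq1 i
      omega
    have hd2n : q i * p j ≠ n := by
      intro hcontra
      exact hkey (hcontra ▸ hqdvd j)
    obtain ⟨v, hv⟩ := hmkv (q i * p j) hd2dvd hd21 hd2n
    have hτu : τ u = {i} := by
      rw [hτ]
      ext l
      simp only [Finset.mem_filter, Finset.mem_univ, true_and, Finset.mem_singleton]
      rw [hu]
      constructor
      · exact hqq l i
      · rintro rfl; exact dvd_rfl
    have hτv : τ v = {i} := by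
      rw [hτ]
      ext l
      simp only [Finset.mem_filter, Finset.mem_univ, true_and, Finset.mem_singleton]
      rw [hv]
      constructor
      · intro hl
        by_contra hli
        by_cases hlj : l = j
        · subst hlj
          exact hkey hl
        · have h1 : p l ∣ q i * p j := dvd_trans (hpd l) hl
          rcases ((hp l).prime.dvd_mul).1 h1 with h2 | h2
          · have h3 : p l ∣ p i := (hp l).dvd_of_dvd_pow h2
            exact hli (hpinj ((Nat.prime_dvd_prime_iff_eq (hp l) (hp i)).1 h3))
          · exact hlj (hpinj ((Nat.prime_dvd_prime_iff_eq (hp l) (hp j)).1 h2))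
      · rintro rfl
        exact Dvd.intro _ rfl
    refine ⟨u, v, ?_, hτu, hτv⟩
    intro hcontra
    have h1 : dv u = dv v := congrArg dv hcontra
    rw [hu, hv] at h1
    have h2 := (hp j).one_lt
    have h3 := hq1 i
    nlinarith [h1]
  -- count the vertices
  have hdivcard : n.divisors.card = ∏ i, (m i + 1) := by
    rw [hn]
    exact card_divisors_prod_pow Finset.univ p m (fun i _ => hp i)
      (fun i _ j _ h => hpinj h)
  have hVcard : Fintype.card {I : Ideal (ZMod n) // I ≠ ⊥ ∧ I ≠ ⊤} =
      (∏ i, (m i + 1)) - 2 := by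
    have hbij : Function.Bijective
        (fun d : {d : ℕ // d ∈ (n.divisors.erase 1).erase n} =>
          (⟨Ideal.span {((d.1 : ℕ) : ZMod n)},
            by
              have hdd : (d.1 : ℕ) ∣ n := (Nat.mem_divisors.1
                (Finset.mem_of_mem_erase (Finset.mem_of_mem_erase d.2))).1
              rw [ne_eq, zmod_span_eq_bot hn0 hdd]
              exact Finset.ne_of_mem_erase d.2,
            by
              have hdd : (d.1 : ℕ) ∣ n := (Nat.mem_divisors.1
                (Finset.mem_of_mem_erase (Finset.mem_of_mem_erase d.2))).1
              rw [ne_eq, zmod_span_eq_top hn1 hdd]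
              exact Finset.ne_of_mem_erase (Finset.mem_of_mem_erase d.2)⟩ :
            {I : Ideal (ZMod n) // I ≠ ⊥ ∧ I ≠ ⊤})) := by
      constructor
      · intro d e hde
        have h1 : Ideal.span {((d.1 : ℕ) : ZMod n)} = Ideal.span {((e.1 : ℕ) : ZMod n)} :=
          congrArg Subtype.val hde
        have hdd : (d.1 : ℕ) ∣ n := (Nat.mem_divisors.1
          (Finset.mem_of_mem_erase (Finset.mem_of_mem_erase d.2))).1
        have hee : (e.1 : ℕ) ∣ n := (Nat.mem_divisors.1
          (Finset.mem_of_mem_erase (Finset.mem_of_mem_erase e.2))).1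
        exact Subtype.ext (zmod_span_inj hn0 hdd hee h1)
      · intro v
        refine ⟨⟨dv v, ?_⟩, ?_⟩
        · refine Finset.mem_erase.2 ⟨hdvne v, Finset.mem_erase.2 ⟨hdv1 v,
            Nat.mem_divisors.2 ⟨hdvn v, hn0⟩⟩⟩
        · exact Subtype.ext (hdvspan v).symm
    have hcard1 := Fintype.card_of_bijective hbij
    rw [Fintype.card_coe] at hcard1
    have hnm : n ∈ n.divisors.erase 1 := by
      refine Finset.mem_erase.2 ⟨by omega, Nat.mem_divisors_self n hn0⟩
    have h1m : (1 : ℕ) ∈ n.divisors := Nat.one_mem_divisors.2 hn0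
    rw [← hcard1, Finset.card_erase_of_mem hnm, Finset.card_erase_of_mem h1m, hdivcard]
    omega
  -- apply the combinatorial lemma
  have hmain := metricDim_twin k (by omega) (essentialIdealGraph (ZMod n)) τ hAdj hneuniv
    hsurj hsingle
  rw [hmain, hVcard, hT]
end
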